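/- Let σ be a nondecreasing sigmoidal function satisfying (Σ1)–(Σ5), where (Σ4) holds with m ∈ ℕ⁺, m ≥ 2, and β > 2m, and assume α > m + 1 in (Σ3). Let a < b be integers, δ > 0 with a + δ < b − δ, and f ∈ C^m([a,b]). Then for each s = 1, …, m, lim_{n→+∞} (d^s/dx^s) F̃_n(f, x) = f^{(s)}(x), uniformly with respect to x ∈ I_δ := [a+δ, b−δ], where F̃_n(f, x) := ∑_{k=na}^{nb} f(k/n) φ_σ(nx − k). -/

import Mathlib

open Filter Topology MeasureTheory

/-- The density (kernel) function generated by a sigmoidal function. -/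
noncomputable def phiFn (σ : ℝ → ℝ) (x : ℝ) : ℝ := (σ (x + 1) - σ (x - 1)) / 2

/-- σ is a (measurable) sigmoidal function. -/
def Sigmoidal (σ : ℝ → ℝ) : Prop :=
  Measurable σ ∧ Tendsto σ atBot (𝓝 0) ∧ Tendsto σ atTop (𝓝 1)

/-- (Σ1): σ(x) - 1/2 is an odd function. -/
def Sigma1 (σ : ℝ → ℝ) : Prop := ∀ x : ℝ, σ (-x) - 1/2 = -(σ x - 1/2)

/-- (Σ2): σ ∈ C²(ℝ) and σ is concave on [0, +∞). -/
def Sigma2 (σ : ℝ → ℝ) : Prop := ContDiff ℝ 2 σ ∧ ConcaveOn ℝ (Set.Ici 0) σ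

/-- (Σ3): σ(x) = O(|x|^{-α-1}) as x → -∞, with α > 0. -/
def Sigma3 (σ : ℝ → ℝ) (α : ℝ) : Prop :=
  0 < α ∧ σ =O[atBot] fun x : ℝ => |x| ^ (-α - 1)

/-- (Σ4): σ ∈ C^m(ℝ), m ≥ 2, and for each s = 1,…,m there are constants
`K s, C s > 0` with |σ^{(s)}(x)| ≤ C s * |x|^{-β-1} for |x| ≥ K s, where β > m + 1. -/
def Sigma4 (σ : ℝ → ℝ) (m : ℕ) (β : ℝ) (K C : ℕ → ℝ) : Prop :=
  2 ≤ m ∧ (m : ℝ) + 1 < β ∧ ContDiff ℝ m σ ∧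
    ∀ s : ℕ, 1 ≤ s → s ≤ m → 0 < K s ∧ 0 < C s ∧
      ∀ x : ℝ, K s ≤ |x| → |iteratedDeriv s σ x| ≤ C s * |x| ^ (-β - 1)

/-- Algebraic moment of order ν of Φ. -/
noncomputable def algMoment (Φ : ℝ → ℝ) (ν : ℕ) (x : ℝ) : ℝ :=
  ∑' k : ℤ, Φ (x - (k : ℝ)) * ((k : ℝ) - x) ^ ν

/-- (Σ5): the algebraic moments of order j = 1,…,m of φ_σ are constants A j. -/
def Sigma5 (σ : ℝ → ℝ) (m : ℕ) (A : ℕ → ℝ) : Prop :=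
  ∀ j : ℕ, 1 ≤ j → j ≤ m → ∀ x : ℝ, algMoment (phiFn σ) j x = A j

/-- Truncated algebraic moment of order ν of Φ (associated with integers a < b). -/
noncomputable def truncMoment (Φ : ℝ → ℝ) (ν : ℕ) (a b : ℤ) (n : ℕ) (u : ℝ) : ℝ :=
  ∑ k ∈ Finset.Icc ((n : ℤ) * a) ((n : ℤ) * b), Φ (u - (k : ℝ)) * ((k : ℝ) - u) ^ ν

/-- The ν-th discrete absolute moment function of Φ (before taking sup over u). -/
noncomputable def discMoment (Φ : ℝ → ℝ) (ν : ℝ) (u : ℝ) : ℝ :=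
  ∑' k : ℤ, |Φ (u - (k : ℝ))| * |u - (k : ℝ)| ^ ν

/-- The Riemann zeta function (as a real series), ζ(p) = ∑_{i≥1} i^{-p}. -/
noncomputable def zetaR (p : ℝ) : ℝ := ∑' i : ℕ, ((i : ℝ) + 1) ^ (-p)

/-- The NN operator F_n activated by σ. -/
noncomputable def Fop (σ : ℝ → ℝ) (f : ℝ → ℝ) (a b : ℝ) (n : ℕ) (x : ℝ) : ℝ :=
  (∑ k ∈ Finset.Icc ⌈(n : ℝ) * a⌉ ⌊(n : ℝ) * b⌋, f ((k : ℝ) / n) * phiFn σ ((n : ℝ) * x - k)) /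
    (∑ k ∈ Finset.Icc ⌈(n : ℝ) * a⌉ ⌊(n : ℝ) * b⌋, phiFn σ ((n : ℝ) * x - k))

/-- The modified NN operator F̃_n (integer endpoints a < b). -/
noncomputable def Ftil (σ : ℝ → ℝ) (f : ℝ → ℝ) (a b : ℤ) (n : ℕ) (x : ℝ) : ℝ :=
  ∑ k ∈ Finset.Icc ((n : ℤ) * a) ((n : ℤ) * b), f ((k : ℝ) / n) * phiFn σ ((n : ℝ) * x - (k : ℝ))

/-- Sup-norm of g on [a,b]. -/
noncomputable def supNormOn (g : ℝ → ℝ) (a b : ℝ) : ℝ := ⨆ x : Set.Icc a b, |g x|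

/-- Modulus of continuity of g on [a,b]. -/
noncomputable def modulus (g : ℝ → ℝ) (a b h : ℝ) : ℝ :=
  sSup {y : ℝ | ∃ u ∈ Set.Icc a b, ∃ v ∈ Set.Icc a b, |u - v| ≤ h ∧ y = |g u - g v|}

/-- Discrete absolute moment (natural order ν) of Φ: sup over u of the moment series. -/
noncomputable def dmomentN (Φ : ℝ → ℝ) (ν : ℕ) : ℝ :=
  ⨆ u : ℝ, ∑' k : ℤ, |Φ (u - (k : ℝ))| * |u - (k : ℝ)| ^ ν



namespace SA


/-- Lemma Z : uniform bound for shifted integer rpow sums. -/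
lemma lemZ {q : ℝ} (hq : q < -1) :
    ∃ D : ℝ, 0 ≤ D ∧ ∀ w : ℝ,
      Summable (fun k : ℤ => if 2 ≤ |w - k| then |w - (k:ℝ)| ^ q else 0) ∧
      ∑' k : ℤ, (if 2 ≤ |w - k| then |w - (k:ℝ)| ^ q else 0) ≤ D := by
  have hsum : Summable (fun l : ℤ => (2:ℝ) ^ (-q) * |(l:ℝ)| ^ q) := by
    simpa using (Real.summable_abs_int_rpow (by linarith : 1 < -q)).mul_left ((2:ℝ) ^ (-q))
  refine ⟨∑' l : ℤ, (2:ℝ) ^ (-q) * |(l:ℝ)| ^ q, tsum_nonneg (fun l => by positivity), fun w => ?_⟩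
  set g : ℤ → ℝ := fun k => if 2 ≤ |w - k| then |w - (k:ℝ)| ^ q else 0 with hg
  have key : ∀ l : ℤ, g (l + ⌊w⌋) ≤ (2:ℝ) ^ (-q) * |(l:ℝ)| ^ q := by
    intro l
    by_cases h : 2 ≤ |w - (l + ⌊w⌋ : ℤ)|
    · have hv0 : (0:ℝ) ≤ w - ⌊w⌋ := by have := Int.floor_le w; linarith
      have hv1 : w - ⌊w⌋ < 1 := by have := Int.lt_floor_add_one w; linarith
      have hv2 : |w - (⌊w⌋:ℝ)| ≤ 1 := by rw [abs_of_nonneg hv0]; linarith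
      have htri : |(l:ℝ)| ≤ |w - (l + ⌊w⌋ : ℤ)| + 1 := by
        have he : (l:ℝ) = (w - ⌊w⌋) - (w - ((l:ℝ) + ⌊w⌋)) := by ring
        calc |(l:ℝ)| = |(w - (⌊w⌋:ℝ)) - (w - ((l:ℝ) + ⌊w⌋))| := by rw [← he]
          _ ≤ |w - (⌊w⌋:ℝ)| + |w - ((l:ℝ) + ⌊w⌋)| := abs_sub _ _
          _ ≤ |w - (l + ⌊w⌋ : ℤ)| + 1 := by push_cast; linarith
      have habs : |(l:ℝ)| / 2 ≤ |w - (l + ⌊w⌋ : ℤ)| := by linarith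
      have hpos : (0:ℝ) < |(l:ℝ)| / 2 := by
        have h1 : |w - ((l + ⌊w⌋:ℤ):ℝ)| ≤ |(l:ℝ)| + |w - (⌊w⌋:ℝ)| := by
          push_cast
          calc |w - ((l:ℝ) + ⌊w⌋)| = |(w - ⌊w⌋) + (-l)| := by ring_nf
            _ ≤ |w - (⌊w⌋:ℝ)| + |(-l:ℝ)| := abs_add_le _ _
            _ = |(l:ℝ)| + |w - (⌊w⌋:ℝ)| := by rw [abs_neg]; ring
        linarith
      have hmono : |w - ((l + ⌊w⌋ : ℤ):ℝ)| ^ q ≤ (|(l:ℝ)| / 2) ^ q :=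
        Real.rpow_le_rpow_of_nonpos hpos habs (by linarith)
      simp only [hg, if_pos h]
      calc |w - ((l + ⌊w⌋ : ℤ):ℝ)| ^ q ≤ (|(l:ℝ)| / 2) ^ q := hmono
        _ = (2:ℝ)^(-q) * |(l:ℝ)| ^ q := by
            rw [div_eq_mul_inv, mul_comm, Real.mul_rpow (by positivity) (abs_nonneg _),
              Real.inv_rpow (by norm_num), ← Real.rpow_neg (by norm_num)]
    · simp only [hg, if_neg h]; positivity
  have hge : ∀ l : ℤ, 0 ≤ g (l + ⌊w⌋) := by
    intro l
    simp only [hg]; split_ifs <;> positivity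
  have hsg : Summable (fun l : ℤ => g (l + ⌊w⌋)) := Summable.of_nonneg_of_le hge key hsum
  have hsum_g : Summable g := by
    rw [← (Equiv.addRight ⌊w⌋).summable_iff (f := g)]; exact hsg
  exact ⟨hsum_g, by
    rw [← (Equiv.addRight ⌊w⌋).tsum_eq g]
    exact Summable.tsum_le_tsum key hsg hsum⟩

lemma pow_mul_rpow {y : ℝ} (hy : 0 < y) (j : ℕ) (p : ℝ) :
    y ^ j * y ^ (-p) = y ^ ((j:ℝ) - p) := by
  rw [← Real.rpow_natCast y j, ← Real.rpow_add hy]; ring_nf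

/-- Window majorant lemma: a summable majorant, uniform over a unit window around `w`,
with a tsum bound independent of `w`. -/
lemma majorant {g : ℝ → ℝ} (hg : Continuous g) {c K p : ℝ} {j : ℕ}
    (hc : 0 ≤ c) (hK : 2 ≤ K) (hp : (j:ℝ) + 1 < p)
    (hd : ∀ y : ℝ, K ≤ |y| → |g y| ≤ c * |y| ^ (-p)) :
    ∃ D : ℝ, 0 ≤ D ∧ ∀ w : ℝ, ∃ u : ℤ → ℝ,
      Summable u ∧ ∑' k : ℤ, u k ≤ D ∧
      ∀ (k : ℤ) (x : ℝ), |x - w| ≤ 1 → |g (x - k)| * |x - k| ^ j ≤ u k := by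
  have hq : (j:ℝ) - p < -1 := by linarith
  obtain ⟨DZ, hDZ0, hZ⟩ := lemZ hq
  obtain ⟨S, hS⟩ := (isCompact_Icc (a := -(K+3)) (b := K+3)).exists_bound_of_continuousOn
    hg.continuousOn
  set S' : ℝ := max (S * (K+3) ^ j) 0 with hS'
  have hS'0 : 0 ≤ S' := le_max_right _ _
  refine ⟨S' * (2*K + 6) + c * 2 ^ p * DZ, by positivity, fun w => ?_⟩
  obtain ⟨hZsum, hZle⟩ := hZ w
  set Zf : ℤ → ℝ := fun k => if 2 ≤ |w - k| then |w - (k:ℝ)| ^ ((j:ℝ) - p) else 0 with hZf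
  have hZf0 : ∀ k, 0 ≤ Zf k := by
    intro k; simp only [hZf]; split_ifs <;> positivity
  set F : Finset ℤ := Finset.Icc ⌈w - (K+2)⌉ ⌊w + (K+2)⌋ with hF
  have hmemF : ∀ k : ℤ, |w - k| < K + 2 → k ∈ F := by
    intro k hk
    rw [abs_lt] at hk
    rw [hF, Finset.mem_Icc]
    constructor
    · exact Int.ceil_le.2 (by linarith [hk.2])
    · exact Int.le_floor.2 (by linarith [hk.1])
  set u : ℤ → ℝ := fun k =>
    (if k ∈ F then S' else 0) + c * 2 ^ p * Zf k with hu
  have hu1sum : Summable (fun k : ℤ => if k ∈ F then S' else 0) :=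
    summable_of_ne_finset_zero (s := F) (fun k hk => by simp [hk])
  have husum : Summable u := hu1sum.add (hZsum.mul_left _)
  refine ⟨u, husum, ?_, ?_⟩
  · rw [hu, Summable.tsum_add hu1sum (hZsum.mul_left _)]
    have h1 : ∑' k : ℤ, (if k ∈ F then S' else 0) ≤ S' * (2*K + 6) := by
      rw [tsum_eq_sum (s := F) (fun k hk => by simp [hk])]
      have : ∑ k ∈ F, (if k ∈ F then S' else 0) = F.card * S' := by
        rw [Finset.sum_congr rfl (fun k hk => if_pos hk), Finset.sum_const, nsmul_eq_mul]
      rw [this]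
      have hcard : (F.card : ℝ) ≤ 2*K + 6 := by
        rw [hF, Int.card_Icc]
        have hA := Int.le_ceil (w - (K+2))
        have hB := Int.floor_le (w + (K+2))
        have h2 : ((⌊w + (K+2)⌋ + 1 - ⌈w - (K+2)⌉).toNat : ℤ)
            = max (⌊w + (K+2)⌋ + 1 - ⌈w - (K+2)⌉) 0 := Int.toNat_eq_max _
        have h3 : ((⌊w + (K+2)⌋ + 1 - ⌈w - (K+2)⌉).toNat : ℝ)
            = max ((⌊w + (K+2)⌋:ℝ) + 1 - ⌈w - (K+2)⌉) 0 := by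
          exact_mod_cast congrArg (fun t : ℤ => (t : ℝ)) h2
        rw [h3]
        apply max_le _ (by linarith)
        linarith
      calc (F.card : ℝ) * S' ≤ (2*K+6) * S' := by
            apply mul_le_mul_of_nonneg_right hcard hS'0
        _ = S' * (2*K+6) := by ring
    have h2 : ∑' k : ℤ, c * 2 ^ p * Zf k ≤ c * 2 ^ p * DZ := by
      rw [tsum_mul_left]
      exact mul_le_mul_of_nonneg_left hZle (by positivity)
    linarith
  · intro k x hx
    rcases lt_or_ge (|w - k|) (K + 2) with hnear | hfar
    · have hxk : |x - (k:ℝ)| ≤ K + 3 := by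
        have : |x - (k:ℝ)| ≤ |x - w| + |w - k| := by
          calc |x - (k:ℝ)| = |(x - w) + (w - k)| := by ring_nf
            _ ≤ |x - w| + |w - k| := abs_add_le _ _
        linarith
      have hb : |g (x - k)| ≤ S := by
        have h' := abs_le.1 hxk
        exact hS _ ⟨by linarith [h'.1], by linarith [h'.2]⟩
      have : |g (x - k)| * |x - k| ^ j ≤ S * (K+3) ^ j := by
        apply mul_le_mul hb (pow_le_pow_left₀ (abs_nonneg _) hxk j) (by positivity)
        exact le_trans (abs_nonneg _) hb
      show |g (x - ↑k)| * |x - ↑k| ^ j ≤ (if k ∈ F then S' else 0) + c * 2 ^ p * Zf k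
      rw [if_pos (hmemF k hnear)]
      have hSS : S * (K+3)^j ≤ S' := le_max_left _ _
      have hZ0 := hZf0 k
      have hcz : (0:ℝ) ≤ c * 2 ^ p * Zf k := by positivity
      linarith
    · -- far case
      have hwk2 : (2:ℝ) ≤ |w - k| := by linarith
      have hxk1 : |w - (k:ℝ)| - 1 ≤ |x - k| := by
        have : |w - (k:ℝ)| ≤ |w - x| + |x - k| := by
          calc |w - (k:ℝ)| = |(w - x) + (x - k)| := by ring_nf
            _ ≤ |w - x| + |x - k| := abs_add_le _ _
        have h2 : |w - x| ≤ 1 := by rwa [abs_sub_comm]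
        linarith
      have hxkK : K ≤ |x - (k:ℝ)| := by linarith
      have hxk2 : |w - (k:ℝ)| / 2 ≤ |x - k| := by linarith
      have hxk0 : (0:ℝ) < |x - (k:ℝ)| := by linarith
      have hterm : |g (x - k)| * |x - k| ^ j ≤ c * |x - (k:ℝ)| ^ ((j:ℝ) - p) := by
        calc |g (x - k)| * |x - k| ^ j ≤ (c * |x - (k:ℝ)| ^ (-p)) * |x - k| ^ j := by
              apply mul_le_mul_of_nonneg_right (hd _ hxkK) (by positivity)
          _ = c * (|x - (k:ℝ)| ^ j * |x - (k:ℝ)| ^ (-p)) := by ring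
          _ = c * |x - (k:ℝ)| ^ ((j:ℝ) - p) := by rw [pow_mul_rpow hxk0]
      have hmono : |x - (k:ℝ)| ^ ((j:ℝ) - p) ≤ (|w - (k:ℝ)| / 2) ^ ((j:ℝ) - p) :=
        Real.rpow_le_rpow_of_nonpos (by linarith) hxk2 (by linarith)
      have hhalf : (|w - (k:ℝ)| / 2) ^ ((j:ℝ) - p) = 2 ^ (p - (j:ℝ)) * |w - (k:ℝ)| ^ ((j:ℝ) - p) := by
        rw [div_eq_mul_inv, mul_comm, Real.mul_rpow (by positivity) (by positivity),
          Real.inv_rpow (by norm_num), ← Real.rpow_neg (by norm_num)]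
        ring_nf
      have h2le : (2:ℝ) ^ (p - (j:ℝ)) ≤ 2 ^ p :=
        Real.rpow_le_rpow_of_exponent_le (by norm_num)
          (by linarith [Nat.cast_nonneg (α := ℝ) j])
      have hZfk : Zf k = |w - (k:ℝ)| ^ ((j:ℝ) - p) := by
        simp only [hZf, if_pos hwk2]
      have hfin : |g (x - k)| * |x - k| ^ j ≤ c * 2 ^ p * Zf k := by
        rw [hZfk]
        calc |g (x - k)| * |x - k| ^ j ≤ c * (2 ^ (p - (j:ℝ)) * |w - (k:ℝ)| ^ ((j:ℝ) - p)) := by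
              rw [← hhalf]; exact hterm.trans (mul_le_mul_of_nonneg_left hmono hc)
          _ = 2 ^ (p - (j:ℝ)) * (c * |w - (k:ℝ)| ^ ((j:ℝ) - p)) := by ring
          _ ≤ 2 ^ p * (c * |w - (k:ℝ)| ^ ((j:ℝ) - p)) := by
              apply mul_le_mul_of_nonneg_right h2le (by positivity)
          _ = c * 2 ^ p * |w - (k:ℝ)| ^ ((j:ℝ) - p) := by ring
      show |g (x - ↑k)| * |x - ↑k| ^ j ≤ (if k ∈ F then S' else 0) + c * 2 ^ p * Zf k
      split_ifs with hkF
      · linarith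
      · simpa using hfin
/-- Uniform summability with uniform bound. -/
lemma abs_moment_bound {g : ℝ → ℝ} (hg : Continuous g) {c K p : ℝ} {j : ℕ}
    (hc : 0 ≤ c) (hK : 2 ≤ K) (hp : (j:ℝ) + 1 < p)
    (hd : ∀ y : ℝ, K ≤ |y| → |g y| ≤ c * |y| ^ (-p)) :
    ∃ D : ℝ, 0 ≤ D ∧ ∀ u : ℝ,
      Summable (fun k : ℤ => |g (u - k)| * |u - (k:ℝ)| ^ j) ∧
      ∑' k : ℤ, |g (u - k)| * |u - (k:ℝ)| ^ j ≤ D := by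
  obtain ⟨D, hD0, hmaj⟩ := majorant hg hc hK hp hd
  refine ⟨D, hD0, fun u => ?_⟩
  obtain ⟨v, hvsum, hvle, hvb⟩ := hmaj u
  have hb : ∀ k : ℤ, |g (u - k)| * |u - (k:ℝ)| ^ j ≤ v k := fun k =>
    hvb k u (by simp)
  have hnn : ∀ k : ℤ, 0 ≤ |g (u - k)| * |u - (k:ℝ)| ^ j := fun k => by positivity
  have hsum : Summable (fun k : ℤ => |g (u - k)| * |u - (k:ℝ)| ^ j) :=
    Summable.of_nonneg_of_le hnn hb hvsum
  exact ⟨hsum, (Summable.tsum_le_tsum hb hsum hvsum).trans hvle⟩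

/-- Summability of the signed moment series. -/
lemma summable_moment {g : ℝ → ℝ} (hg : Continuous g) {c K p : ℝ} {j : ℕ}
    (hc : 0 ≤ c) (hK : 2 ≤ K) (hp : (j:ℝ) + 1 < p)
    (hd : ∀ y : ℝ, K ≤ |y| → |g y| ≤ c * |y| ^ (-p)) (u : ℝ) :
    Summable (fun k : ℤ => g (u - k) * ((k:ℝ) - u) ^ j) := by
  obtain ⟨D, hD0, h⟩ := abs_moment_bound hg hc hK hp hd
  apply Summable.of_abs
  have : ∀ k : ℤ, |g (u - k) * ((k:ℝ) - u) ^ j| = |g (u - k)| * |u - (k:ℝ)| ^ j := by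
    intro k
    rw [abs_mul, abs_pow, abs_sub_comm]
  rw [funext this]
  exact (h u).1

/-- Tail bound lemma. -/
lemma tail_bound {g : ℝ → ℝ} (hg : Continuous g) {c K p τ : ℝ} {j : ℕ}
    (hc : 0 ≤ c) (hK : 2 ≤ K) (hp : (j:ℝ) + 1 < p) (hτ : 0 < τ)
    (hq : (j:ℝ) - p + τ < -1)
    (hd : ∀ y : ℝ, K ≤ |y| → |g y| ≤ c * |y| ^ (-p)) :
    ∃ c' : ℝ, 0 ≤ c' ∧ ∀ (u M : ℝ), max (2*K) 4 ≤ M →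
      ∀ (P : ℤ → Prop) (_ : DecidablePred P), (∀ k, P k → M ≤ |u - k|) →
      (Summable fun k : ℤ => if P k then |g (u - k)| * |u - (k:ℝ)| ^ j else 0) ∧
      ∑' k : ℤ, (if P k then |g (u - k)| * |u - (k:ℝ)| ^ j else 0) ≤ c' * M ^ (-τ) := by
  obtain ⟨DZ, hDZ0, hZ⟩ := lemZ hq
  refine ⟨c * DZ, by positivity, fun u M hM P _ hP => ?_⟩
  obtain ⟨hZsum, hZle⟩ := hZ u
  have hM4 : (4:ℝ) ≤ M := le_trans (le_max_right _ _) hM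
  have hM2K : 2*K ≤ M := le_trans (le_max_left _ _) hM
  have key : ∀ k : ℤ, (if P k then |g (u - k)| * |u - (k:ℝ)| ^ j else 0)
      ≤ c * M ^ (-τ) * (if 2 ≤ |u - k| then |u - (k:ℝ)| ^ ((j:ℝ) - p + τ) else 0) := by
    intro k
    by_cases hPk : P k
    · have h1 : M ≤ |u - k| := hP k hPk
      have h2 : (2:ℝ) ≤ |u - k| := by linarith
      have hKk : K ≤ |u - k| := by linarith
      have h0 : (0:ℝ) < |u - (k:ℝ)| := by linarith
      rw [if_pos hPk, if_pos h2]
      have hdk : |g (u - k)| * |u - (k:ℝ)| ^ j ≤ c * |u - (k:ℝ)| ^ ((j:ℝ) - p) := by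
        calc |g (u - k)| * |u - (k:ℝ)| ^ j
            ≤ (c * |u - (k:ℝ)| ^ (-p)) * |u - (k:ℝ)| ^ j := by
              apply mul_le_mul_of_nonneg_right (hd _ hKk) (by positivity)
          _ = c * (|u - (k:ℝ)| ^ j * |u - (k:ℝ)| ^ (-p)) := by ring
          _ = c * |u - (k:ℝ)| ^ ((j:ℝ) - p) := by rw [pow_mul_rpow h0]
      have hsplit : |u - (k:ℝ)| ^ ((j:ℝ) - p)
          = |u - (k:ℝ)| ^ (-τ) * |u - (k:ℝ)| ^ ((j:ℝ) - p + τ) := by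
        rw [← Real.rpow_add h0]; ring_nf
      have hmono : |u - (k:ℝ)| ^ (-τ) ≤ M ^ (-τ) :=
        Real.rpow_le_rpow_of_nonpos (by linarith) h1 (by linarith)
      calc |g (u - k)| * |u - (k:ℝ)| ^ j ≤ c * |u - (k:ℝ)| ^ ((j:ℝ) - p) := hdk
        _ = c * (|u - (k:ℝ)| ^ (-τ) * |u - (k:ℝ)| ^ ((j:ℝ) - p + τ)) := by rw [← hsplit]
        _ ≤ c * (M ^ (-τ) * |u - (k:ℝ)| ^ ((j:ℝ) - p + τ)) := by
            apply mul_le_mul_of_nonneg_left _ hc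
            apply mul_le_mul_of_nonneg_right hmono (by positivity)
        _ = c * M ^ (-τ) * |u - (k:ℝ)| ^ ((j:ℝ) - p + τ) := by ring
    · rw [if_neg hPk]
      positivity
  have hnn : ∀ k : ℤ, 0 ≤ (if P k then |g (u - k)| * |u - (k:ℝ)| ^ j else 0) := by
    intro k; split_ifs <;> positivity
  have hsum : Summable (fun k : ℤ => if P k then |g (u - k)| * |u - (k:ℝ)| ^ j else 0) :=
    Summable.of_nonneg_of_le hnn key ((hZsum.mul_left _))
  refine ⟨hsum, ?_⟩
  calc ∑' k : ℤ, (if P k then |g (u - k)| * |u - (k:ℝ)| ^ j else 0)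
      ≤ ∑' k : ℤ, c * M ^ (-τ) * (if 2 ≤ |u - k| then |u - (k:ℝ)| ^ ((j:ℝ) - p + τ) else 0) :=
        Summable.tsum_le_tsum key hsum (hZsum.mul_left _)
    _ = c * M ^ (-τ) * ∑' k : ℤ, (if 2 ≤ |u - k| then |u - (k:ℝ)| ^ ((j:ℝ) - p + τ) else 0) :=
        tsum_mul_left
    _ ≤ c * DZ * M ^ (-τ) := by
        have h1 : (0:ℝ) ≤ c * M ^ (-τ) := by positivity
        calc c * M ^ (-τ) * ∑' k : ℤ, (if 2 ≤ |u - k| then |u - (k:ℝ)| ^ ((j:ℝ) - p + τ) else 0)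
            ≤ c * M ^ (-τ) * DZ := mul_le_mul_of_nonneg_left hZle h1
          _ = c * DZ * M ^ (-τ) := by ring
lemma div_two_rpow {y q : ℝ} (hy : 0 ≤ y) : (y/2) ^ q = 2^(-q) * y^q := by
  rw [div_eq_mul_inv, mul_comm, Real.mul_rpow (by positivity) hy,
    Real.inv_rpow (by norm_num), ← Real.rpow_neg (by norm_num)]

section Sigma
variable {σ : ℝ → ℝ} {α β : ℝ} {m : ℕ} {K C : ℕ → ℝ}

lemma sigma_nonneg (hσ : Sigmoidal σ) (hmono : Monotone σ) (x : ℝ) : 0 ≤ σ x :=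
  le_of_tendsto hσ.2.1 ((eventually_le_atBot x).mono fun _ hy => hmono hy)

lemma sigma_le_one (hσ : Sigmoidal σ) (hmono : Monotone σ) (x : ℝ) : σ x ≤ 1 :=
  ge_of_tendsto hσ.2.2 ((eventually_ge_atTop x).mono fun _ hy => hmono hy)

lemma sigma_neg (h1 : Sigma1 σ) (x : ℝ) : σ (-x) = 1 - σ x := by
  have := h1 x; linarith

lemma phi_even (h1 : Sigma1 σ) (y : ℝ) : phiFn σ (-y) = phiFn σ y := by
  unfold phiFn
  have e1 : -y + 1 = -(y - 1) := by ring
  have e2 : -y - 1 = -(y + 1) := by ring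
  rw [e1, e2, sigma_neg h1, sigma_neg h1]
  ring

lemma phi_nonneg (hmono : Monotone σ) (y : ℝ) : 0 ≤ phiFn σ y := by
  unfold phiFn
  have := hmono (show y - 1 ≤ y + 1 by linarith)
  linarith

lemma phi_contDiff (hσ : ContDiff ℝ m σ) : ContDiff ℝ m (phiFn σ) := by
  unfold phiFn
  exact ((hσ.comp (contDiff_id.add contDiff_const)).sub
    (hσ.comp (contDiff_id.sub contDiff_const))).div_const 2

lemma iteratedDeriv_phi (hσ : ContDiff ℝ m σ) {s : ℕ} (hs : s ≤ m) :
    ∀ y : ℝ, iteratedDeriv s (phiFn σ) y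
      = (iteratedDeriv s σ (y+1) - iteratedDeriv s σ (y-1))/2 := by
  induction s with
  | zero => intro y; simp [phiFn]
  | succ s ih =>
    intro y
    have hsm : s ≤ m := le_trans (Nat.le_succ s) hs
    have hslt : (s : WithTop ℕ∞) < m := by exact_mod_cast Nat.lt_of_succ_le hs
    have hdiff : Differentiable ℝ (iteratedDeriv s σ) :=
      hσ.differentiable_iteratedDeriv s hslt
    have hfun : iteratedDeriv s (phiFn σ)
        = fun y => (iteratedDeriv s σ (y+1) - iteratedDeriv s σ (y-1))/2 :=
      funext (ih hsm)
    rw [iteratedDeriv_succ, hfun]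
    have d1 : DifferentiableAt ℝ (fun y : ℝ => iteratedDeriv s σ (y+1)) y :=
      (hdiff ((y:ℝ)+1)).comp y ((differentiable_id.add_const 1) y)
    have d2 : DifferentiableAt ℝ (fun y : ℝ => iteratedDeriv s σ (y-1)) y :=
      (hdiff ((y:ℝ)-1)).comp y ((differentiable_id.sub_const 1) y)
    rw [deriv_div_const, deriv_fun_sub d1 d2]
    have e1 : deriv (fun y : ℝ => iteratedDeriv s σ (y+1)) y = iteratedDeriv (s+1) σ (y+1) := by
      rw [iteratedDeriv_succ]
      exact deriv_comp_add_const (iteratedDeriv s σ) 1 y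
    have e2 : deriv (fun y : ℝ => iteratedDeriv s σ (y-1)) y = iteratedDeriv (s+1) σ (y-1) := by
      rw [iteratedDeriv_succ]
      have : (fun y : ℝ => iteratedDeriv s σ (y-1)) = fun y : ℝ => iteratedDeriv s σ (y + (-1)) := by
        funext t; ring_nf
      rw [this, deriv_comp_add_const (iteratedDeriv s σ) (-1) y]
      ring_nf
    rw [e1, e2]

/-- Decay of the iterated derivatives of φ_σ. -/
lemma psi_decay (hσ : Sigmoidal σ) (hmono : Monotone σ) (h1 : Sigma1 σ)
    (h3 : Sigma3 σ α) (h4 : Sigma4 σ m β K C)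
    {s : ℕ} (hs : s ≤ m) (hα : (m:ℝ) + 1 < α) :
    ∃ c Kc p : ℝ, 0 ≤ c ∧ 2 ≤ Kc ∧ (m:ℝ)+1 < p ∧ (1 ≤ s → p = β+1) ∧
      ∀ y : ℝ, Kc ≤ |y| → |iteratedDeriv s (phiFn σ) y| ≤ c * |y| ^ (-p) := by
  rcases Nat.eq_zero_or_pos s with rfl | hs1
  · -- s = 0 : use Σ3 and symmetry
    obtain ⟨c₀, hc₀pos, hOW⟩ := h3.2.exists_pos
    obtain ⟨K₀, hK₀⟩ := eventually_atBot.1 hOW.bound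
    set Kc : ℝ := max (|K₀| + 2) 4 with hKc
    set p : ℝ := α + 1 with hp
    refine ⟨c₀ * 2 ^ p, Kc, p, by positivity, le_trans (by norm_num) (le_max_right _ _),
      by linarith, by omega, ?_⟩
    have neg_case : ∀ y : ℝ, y ≤ 0 → Kc ≤ |y| → |phiFn σ y| ≤ c₀ * 2 ^ p * |y| ^ (-p) := by
      intro y hy0 hyK
      have hKc4 : (4:ℝ) ≤ Kc := le_max_right _ _
      have hKcK : |K₀| + 2 ≤ Kc := le_max_left _ _
      have hyneg : y ≤ -Kc := by
        rw [abs_of_nonpos hy0] at hyK; linarith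
      have hy1 : y + 1 ≤ K₀ := by
        have : -|K₀| ≤ K₀ := neg_abs_le _
        linarith
      have habs1 : |y|/2 ≤ |y+1| := by
        rw [abs_of_nonpos hy0, abs_of_nonpos (by linarith : y + 1 ≤ 0)]
        linarith
      have hb : σ (y+1) ≤ c₀ * |y+1| ^ (-α-1) := by
        have := hK₀ (y+1) hy1
        rw [Real.norm_eq_abs, Real.norm_eq_abs,
          abs_of_nonneg (Real.rpow_nonneg (abs_nonneg _) _)] at this
        exact (le_abs_self _).trans this
      have hψ : |phiFn σ y| ≤ σ (y+1) := by
        rw [abs_of_nonneg (phi_nonneg hmono y)]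
        unfold phiFn
        have := sigma_nonneg hσ hmono (y-1)
        have := sigma_le_one hσ hmono (y+1)
        have := sigma_nonneg hσ hmono (y+1)
        linarith
      have hmono1 : |y+1| ^ (-α-1) ≤ (|y|/2) ^ (-α-1) :=
        Real.rpow_le_rpow_of_nonpos (by linarith) habs1 (by linarith)
      have hhalf : (|y|/2) ^ (-α-1) = 2^p * |y| ^ (-p) := by
        rw [div_two_rpow (abs_nonneg y)]
        congr 1
        · congr 1; rw [hp]; ring
        · congr 1; rw [hp]; ring
      calc |phiFn σ y| ≤ σ (y+1) := hψ
        _ ≤ c₀ * |y+1| ^ (-α-1) := hb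
        _ ≤ c₀ * (2^p * |y| ^ (-p)) := by
            rw [← hhalf]
            exact mul_le_mul_of_nonneg_left hmono1 hc₀pos.le
        _ = c₀ * 2 ^ p * |y| ^ (-p) := by ring
    intro y hy
    simp only [iteratedDeriv_zero]
    rcases le_or_gt y 0 with h | h
    · exact neg_case y h hy
    · have := neg_case (-y) (by linarith) (by rwa [abs_neg])
      rwa [phi_even h1, abs_neg] at this
  · -- s ≥ 1 : use Σ4
    obtain ⟨hKs, hCs, hdec⟩ := h4.2.2.2 s hs1 hs
    refine ⟨C s * 2 ^ (β+1), max (K s + 1) 4, β+1, by positivity,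
      le_trans (by norm_num) (le_max_right _ _), by linarith [h4.2.1], fun _ => rfl, ?_⟩
    intro y hy
    have hy4 : (4:ℝ) ≤ |y| := le_trans (le_max_right _ _) hy
    have hyK : K s + 1 ≤ |y| := le_trans (le_max_left _ _) hy
    have hcases : (K s ≤ |y+1| ∧ K s ≤ |y-1|) ∧ (|y|/2 ≤ |y+1| ∧ |y|/2 ≤ |y-1|) := by
      rcases abs_cases y with ⟨h, h0⟩ | ⟨h, h0⟩
      · rw [abs_of_nonneg (show (0:ℝ) ≤ y + 1 by linarith),
          abs_of_nonneg (show (0:ℝ) ≤ y - 1 by linarith)]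
        refine ⟨⟨by linarith, by linarith⟩, by linarith, by linarith⟩
      · rw [abs_of_nonpos (show y + 1 ≤ (0:ℝ) by linarith),
          abs_of_nonpos (show y - 1 ≤ (0:ℝ) by linarith)]
        refine ⟨⟨by linarith, by linarith⟩, by linarith, by linarith⟩
    have h1' := hcases.1
    have h2' := hcases.2
    rw [iteratedDeriv_phi h4.2.2.1 hs y]
    have b1 : |iteratedDeriv s σ (y+1)| ≤ C s * |y+1| ^ (-β-1) := hdec _ h1'.1
    have b2 : |iteratedDeriv s σ (y-1)| ≤ C s * |y-1| ^ (-β-1) := hdec _ h1'.2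
    have hmono1 : |y+1| ^ (-β-1) ≤ (|y|/2) ^ (-β-1) :=
      Real.rpow_le_rpow_of_nonpos (by linarith) h2'.1 (by linarith [h4.2.1, Nat.cast_nonneg (α := ℝ) m])
    have hmono2 : |y-1| ^ (-β-1) ≤ (|y|/2) ^ (-β-1) :=
      Real.rpow_le_rpow_of_nonpos (by linarith) h2'.2 (by linarith [h4.2.1, Nat.cast_nonneg (α := ℝ) m])
    have hhalf : (|y|/2) ^ (-β-1) = 2^(β+1) * |y| ^ (-(β+1)) := by
      rw [div_two_rpow (abs_nonneg y)]
      congr 1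
      · congr 1; ring
      · congr 1; ring
    calc |(iteratedDeriv s σ (y+1) - iteratedDeriv s σ (y-1))/2|
        ≤ (|iteratedDeriv s σ (y+1)| + |iteratedDeriv s σ (y-1)|)/2 := by
          rw [abs_div, abs_two]
          have := abs_sub (iteratedDeriv s σ (y+1)) (iteratedDeriv s σ (y-1))
          linarith
      _ ≤ (C s * (|y|/2) ^ (-β-1) + C s * (|y|/2) ^ (-β-1))/2 := by
          have := mul_le_mul_of_nonneg_left hmono1 hCs.le
          have := mul_le_mul_of_nonneg_left hmono2 hCs.le
          linarith
      _ = C s * (|y|/2) ^ (-β-1) := by ring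
      _ = C s * 2^(β+1) * |y| ^ (-(β+1)) := by rw [hhalf]; ring

lemma psi0_summable (hσ : Sigmoidal σ) (hmono : Monotone σ) (h1 : Sigma1 σ)
    (h3 : Sigma3 σ α) (h4 : Sigma4 σ m β K C) (hα : (m:ℝ) + 1 < α) (x : ℝ) :
    Summable (fun k : ℤ => phiFn σ (x - k)) := by
  obtain ⟨c, Kc, p, hc, hKc, hp, _, hdec⟩ :=
    psi_decay (s := 0) hσ hmono h1 h3 h4 (Nat.zero_le m) hα
  simp only [iteratedDeriv_zero] at hdec
  have := summable_moment (j := 0) ((phi_contDiff h4.2.2.1).continuous) hc hKc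
    (by push_cast; linarith [Nat.cast_nonneg (α := ℝ) m]) hdec x
  simpa using this

/-- Partition of unity: the translates of φ_σ sum to 1. -/
lemma hasSum_phi_one (hσ : Sigmoidal σ) (hmono : Monotone σ) (h1 : Sigma1 σ)
    (h3 : Sigma3 σ α) (h4 : Sigma4 σ m β K C) (hα : (m:ℝ) + 1 < α) (x : ℝ) :
    HasSum (fun k : ℤ => phiFn σ (x - k)) 1 := by
  have hsum := psi0_summable hσ hmono h1 h3 h4 hα x
  set t : ℝ := ∑' k : ℤ, phiFn σ (x - k) with ht
  have hhs : HasSum (fun k : ℤ => phiFn σ (x - k)) t := hsum.hasSum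
  -- partial sums over Icc (-N) N
  have hIcc : Tendsto (fun N : ℕ => Finset.Icc (-(N:ℤ)) N) atTop atTop := by
    apply tendsto_atTop_finset_of_monotone
    · intro N M hNM
      apply Finset.Icc_subset_Icc <;> omega
    · intro k
      refine ⟨k.natAbs, ?_⟩
      rw [Finset.mem_Icc, Int.natCast_natAbs]
      exact ⟨neg_abs_le k, le_abs_self k⟩
  have htend1 : Tendsto (fun N : ℕ => ∑ k ∈ Finset.Icc (-(N:ℤ)) N, phiFn σ (x - k))
      atTop (𝓝 t) := hhs.comp hIcc
  have hform : ∀ N : ℕ, ∑ k ∈ Finset.Icc (-(N:ℤ)) N, phiFn σ (x - k)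
      = (σ (x + N + 1) + σ (x + N) - σ (x - N) - σ (x - N - 1))/2 := by
    intro N
    induction N with
    | zero => simp [phiFn]
    | succ N ih =>
      have hins : Finset.Icc (-((N:ℤ)+1)) ((N:ℤ)+1)
          = insert (-((N:ℤ)+1)) (insert ((N:ℤ)+1) (Finset.Icc (-(N:ℤ)) N)) := by
        ext k; simp [Finset.mem_Icc, Finset.mem_insert]; omega
      push_cast
      rw [hins, Finset.sum_insert (by simp only [Finset.mem_insert, Finset.mem_Icc]; omega),
        Finset.sum_insert (by simp only [Finset.mem_Icc]; omega)]
      push_cast at ih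
      rw [ih]
      unfold phiFn
      push_cast
      ring_nf
  have htend2 : Tendsto (fun N : ℕ => ∑ k ∈ Finset.Icc (-(N:ℤ)) N, phiFn σ (x - k))
      atTop (𝓝 1) := by
    rw [funext hform]
    have l1 : Tendsto (fun N : ℕ => σ (x + N + 1)) atTop (𝓝 1) := by
      apply hσ.2.2.comp
      apply tendsto_atTop_add_const_right
      apply tendsto_atTop_add_const_left
      exact tendsto_natCast_atTop_atTop
    have l2 : Tendsto (fun N : ℕ => σ (x + N)) atTop (𝓝 1) := by
      apply hσ.2.2.comp
      apply tendsto_atTop_add_const_left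
      exact tendsto_natCast_atTop_atTop
    have lneg : Tendsto (fun N : ℕ => x - N) atTop atBot := by
      apply tendsto_atBot_add_const_left
      exact tendsto_neg_atBot_iff.2 tendsto_natCast_atTop_atTop
    have l3 : Tendsto (fun N : ℕ => σ (x - N)) atTop (𝓝 0) := hσ.2.1.comp lneg
    have l4 : Tendsto (fun N : ℕ => σ (x - N - 1)) atTop (𝓝 0) := by
      apply hσ.2.1.comp
      apply tendsto_atBot_add_const_right
      exact lneg
    have := (((l1.add l2).sub l3).sub l4).div_const 2
    norm_num at this
    exact this
  have : t = 1 := tendsto_nhds_unique htend1 htend2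
  rwa [this] at hhs

end Sigma

noncomputable def Aex (A : ℕ → ℝ) (i : ℕ) : ℝ := if i = 0 then 1 else A i

noncomputable def momVal (A : ℕ → ℝ) (r j : ℕ) : ℝ :=
  if r ≤ j then (j.descFactorial r : ℝ) * Aex A (j - r) else 0

section Moments
variable {σ : ℝ → ℝ} {α β : ℝ} {m : ℕ} {K C : ℕ → ℝ} {A : ℕ → ℝ}

/-- The fundamental moment identities for derivatives of φ_σ. -/
lemma hasSum_moments (hσ : Sigmoidal σ) (hmono : Monotone σ) (h1 : Sigma1 σ)
    (h3 : Sigma3 σ α) (h4 : Sigma4 σ m β K C) (h5 : Sigma5 σ m A) (hα : (m:ℝ) + 1 < α) :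
    ∀ r : ℕ, r ≤ m → ∀ j : ℕ, j ≤ m → ∀ x : ℝ,
      HasSum (fun k : ℤ => iteratedDeriv r (phiFn σ) (x - k) * ((k:ℝ) - x) ^ j)
        (momVal A r j) := by
  have hcont : ∀ r : ℕ, r ≤ m → Continuous (iteratedDeriv r (phiFn σ)) := fun r hr =>
    (phi_contDiff h4.2.2.1).continuous_iteratedDeriv r (by exact_mod_cast hr)
  intro r
  induction r with
  | zero =>
    intro _ j hj x
    rcases Nat.eq_zero_or_pos j with rfl | hj1
    · have h := hasSum_phi_one hσ hmono h1 h3 h4 hα x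
      have : momVal A 0 0 = 1 := by simp [momVal, Aex]
      rw [this]
      simpa using h
    · obtain ⟨c, Kc, p, hc, hKc, hp, _, hdec⟩ :=
        psi_decay (s := 0) hσ hmono h1 h3 h4 (Nat.zero_le m) hα
      have hjm : (j:ℝ) ≤ (m:ℝ) := by exact_mod_cast hj
      have hsum := summable_moment (j := j) (hcont 0 (Nat.zero_le m)) hc hKc
        (by linarith) hdec x
      have hval : ∑' k : ℤ, iteratedDeriv 0 (phiFn σ) (x - k) * ((k:ℝ) - x) ^ j = A j := by
        simp only [iteratedDeriv_zero]
        exact h5 j hj1 hj x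
      have : momVal A 0 j = A j := by
        have hjne : j ≠ 0 := by omega
        simp [momVal, Aex, hjne]
      rw [this, ← hval]
      exact hsum.hasSum
  | succ r ih =>
    intro hr1 j hj x
    have hrm : r ≤ m := le_trans (Nat.le_succ r) hr1
    have hrlt : (r : WithTop ℕ∞) < (m : WithTop ℕ∞) := by exact_mod_cast Nat.lt_of_succ_le hr1
    obtain ⟨c1, K1, p1, hc1, hK1, hp1, _, hd1⟩ := psi_decay hσ hmono h1 h3 h4 hrm hα
    obtain ⟨c2, K2, p2, hc2, hK2, hp2, _, hd2⟩ := psi_decay hσ hmono h1 h3 h4 hr1 hα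
    have hjm : (j:ℝ) ≤ m := by exact_mod_cast hj
    have hj1m : ((j-1:ℕ):ℝ) ≤ m := by
      have : j - 1 ≤ m := le_trans (Nat.sub_le _ _) hj
      exact_mod_cast this
    obtain ⟨D1, hD10, hmaj1⟩ := majorant (j := j-1) (hcont r hrm) hc1 hK1 (by linarith) hd1
    obtain ⟨D2, hD20, hmaj2⟩ := majorant (j := j) (hcont (r+1) hr1) hc2 hK2 (by linarith) hd2
    obtain ⟨u1, hu1sum, _, hu1⟩ := hmaj1 x
    obtain ⟨u2, hu2sum, _, hu2⟩ := hmaj2 x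
    set Ψr := iteratedDeriv r (phiFn σ) with hΨr
    set Ψr1 := iteratedDeriv (r+1) (phiFn σ) with hΨr1
    set g : ℤ → ℝ → ℝ := fun k z => Ψr (z - k) * ((k:ℝ) - z) ^ j with hgdef
    set g' : ℤ → ℝ → ℝ := fun k z =>
      Ψr1 (z - k) * ((k:ℝ) - z) ^ j + Ψr (z - k) * (-((j:ℝ) * ((k:ℝ) - z) ^ (j-1))) with hg'def
    have hdiffΨ : Differentiable ℝ Ψr :=
      (phi_contDiff h4.2.2.1).differentiable_iteratedDeriv r hrlt
    have hHD : ∀ (k : ℤ) (z : ℝ), HasDerivAt (g k) (g' k z) z := by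
      intro k z
      have hbase : HasDerivAt Ψr (Ψr1 (z - k)) (z - k) := by
        have := (hdiffΨ (z - (k:ℝ))).hasDerivAt
        rwa [hΨr1, iteratedDeriv_succ]
      have hin : HasDerivAt (fun z : ℝ => z - (k:ℝ)) 1 z := (hasDerivAt_id z).sub_const _
      have h₁ : HasDerivAt (fun z : ℝ => Ψr (z - k)) (Ψr1 (z - k)) z := by
        have := hbase.comp z hin
        simpa [Function.comp_def] using this
      have hin2 : HasDerivAt (fun z : ℝ => (k:ℝ) - z) (-1) z := (hasDerivAt_id z).const_sub _
      have hpow : HasDerivAt (fun y : ℝ => y ^ j) ((j:ℝ) * ((k:ℝ) - z) ^ (j-1)) ((k:ℝ) - z) :=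
        hasDerivAt_pow j _
      have h₂ : HasDerivAt (fun z : ℝ => ((k:ℝ) - z) ^ j)
          (-((j:ℝ) * ((k:ℝ) - z) ^ (j-1))) z := by
        have := hpow.comp z hin2
        simpa [Function.comp_def] using this
      have := h₁.fun_mul h₂
      simpa [hg'def, mul_comm] using this
    set u : ℤ → ℝ := fun k => u2 k + (j:ℝ) * u1 k with hudef
    have husum : Summable u := hu2sum.add (hu1sum.mul_left _)
    have hbnd : ∀ (k : ℤ), ∀ z ∈ Set.Ioo (x-1) (x+1), ‖g' k z‖ ≤ u k := by
      intro k z hz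
      have hzx : |z - x| ≤ 1 := by
        rw [abs_le]; constructor <;> [linarith [hz.1]; linarith [hz.2]]
      have b1 : |Ψr (z - k)| * |z - (k:ℝ)| ^ (j-1) ≤ u1 k := hu1 k z hzx
      have b2 : |Ψr1 (z - k)| * |z - (k:ℝ)| ^ j ≤ u2 k := hu2 k z hzx
      rw [Real.norm_eq_abs, hg'def]
      have e1 : |Ψr1 (z - k) * ((k:ℝ) - z) ^ j| = |Ψr1 (z - k)| * |z - (k:ℝ)| ^ j := by
        rw [abs_mul, abs_pow, abs_sub_comm]
      have e2 : |Ψr (z - k) * (-((j:ℝ) * ((k:ℝ) - z) ^ (j-1)))|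
          = (j:ℝ) * (|Ψr (z - k)| * |z - (k:ℝ)| ^ (j-1)) := by
        rw [abs_mul, abs_neg, abs_mul, abs_pow, abs_sub_comm, Nat.abs_cast]
        ring
      calc |Ψr1 (z - k) * ((k:ℝ) - z) ^ j + Ψr (z - k) * (-((j:ℝ) * ((k:ℝ) - z) ^ (j-1)))|
          ≤ |Ψr1 (z - k) * ((k:ℝ) - z) ^ j| + |Ψr (z - k) * (-((j:ℝ) * ((k:ℝ) - z) ^ (j-1)))| :=
            abs_add_le _ _
        _ ≤ u2 k + (j:ℝ) * u1 k := by
            rw [e1, e2]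
            have : (j:ℝ) * (|Ψr (z - k)| * |z - (k:ℝ)| ^ (j-1)) ≤ (j:ℝ) * u1 k :=
              mul_le_mul_of_nonneg_left b1 (Nat.cast_nonneg j)
            linarith
        _ = u k := rfl
    have hconv : Summable fun k : ℤ => g k x :=
      summable_moment (hcont r hrm) hc1 hK1 (by linarith) hd1 x
    have hHDsum : HasDerivAt (fun z => ∑' k : ℤ, g k z) (∑' k : ℤ, g' k x) x :=
      hasDerivAt_tsum_of_isPreconnected husum isOpen_Ioo (convex_Ioo _ _).isPreconnected
        (fun k z _ => hHD k z) hbnd (Set.mem_Ioo.2 ⟨by linarith, by linarith⟩) hconv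
        (Set.mem_Ioo.2 ⟨by linarith, by linarith⟩)
    have hconst : (fun z => ∑' k : ℤ, g k z) = fun _ => momVal A r j := by
      funext z
      exact (ih hrm j hj z).tsum_eq
    have hzero : ∑' k : ℤ, g' k x = 0 := by
      rw [hconst] at hHDsum
      exact hHDsum.unique (hasDerivAt_const x _)
    -- split the tsum
    have S1 : Summable fun k : ℤ => Ψr1 (x - k) * ((k:ℝ) - x) ^ j :=
      summable_moment (hcont (r+1) hr1) hc2 hK2 (by linarith) hd2 x
    have S2 : Summable fun k : ℤ => Ψr (x - k) * ((k:ℝ) - x) ^ (j-1) :=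
      summable_moment (hcont r hrm) hc1 hK1 (by linarith [hj1m]) hd1 x
    have S2' : Summable fun k : ℤ => Ψr (x - k) * (-((j:ℝ) * ((k:ℝ) - x) ^ (j-1))) := by
      have := S2.mul_left (-(j:ℝ))
      apply this.congr
      intro k; ring
    have hsplit : ∑' k : ℤ, g' k x
        = (∑' k : ℤ, Ψr1 (x - k) * ((k:ℝ) - x) ^ j)
          + ∑' k : ℤ, Ψr (x - k) * (-((j:ℝ) * ((k:ℝ) - x) ^ (j-1))) :=
      Summable.tsum_add S1 S2'
    have hsecond : ∑' k : ℤ, Ψr (x - k) * (-((j:ℝ) * ((k:ℝ) - x) ^ (j-1)))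
        = -((j:ℝ) * momVal A r (j-1)) := by
      have e : ∀ k : ℤ, Ψr (x - k) * (-((j:ℝ) * ((k:ℝ) - x) ^ (j-1)))
          = (-(j:ℝ)) * (Ψr (x - k) * ((k:ℝ) - x) ^ (j-1)) := fun k => by ring
      rw [funext e, tsum_mul_left]
      have := (ih hrm (j-1) (le_trans (Nat.sub_le _ _) hj) x).tsum_eq
      rw [this]; ring
    have hfirst : ∑' k : ℤ, Ψr1 (x - k) * ((k:ℝ) - x) ^ j = (j:ℝ) * momVal A r (j-1) := by
      have := hzero
      rw [hsplit, hsecond] at this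
      linarith
    have hvalue : (j:ℝ) * momVal A r (j-1) = momVal A (r+1) j := by
      rcases Nat.eq_zero_or_pos j with rfl | hjpos
      · simp [momVal]
      · obtain ⟨j0, rfl⟩ : ∃ j0, j = j0 + 1 := ⟨j - 1, by omega⟩
        unfold momVal
        simp only [Nat.add_sub_cancel]
        rcases le_or_gt (r+1) (j0+1) with hle | hlt
        · rw [if_pos hle, if_pos (by omega : r ≤ j0)]
          have hidx : j0 - r = j0 + 1 - (r + 1) := by omega
          rw [← hidx, Nat.succ_descFactorial_succ]
          push_cast; ring
        · rw [if_neg (by omega), if_neg (by omega)]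
          ring
    have : HasSum (fun k : ℤ => Ψr1 (x - k) * ((k:ℝ) - x) ^ j) (∑' k : ℤ, Ψr1 (x - k) * ((k:ℝ) - x) ^ j) :=
      S1.hasSum
    rwa [hfirst, hvalue] at this

end Moments

section FinDeriv
variable {σ : ℝ → ℝ} {m : ℕ}

lemma iteratedDeriv_finsum (hσC : ContDiff ℝ m σ) {s : ℕ} (hs : s ≤ m)
    (Λ : Finset ℤ) (cf : ℤ → ℝ) (n : ℕ) (x : ℝ) :
    iteratedDeriv s (fun y => ∑ k ∈ Λ, cf k * phiFn σ ((n:ℝ) * y - k)) x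
      = (n:ℝ)^s * ∑ k ∈ Λ, cf k * iteratedDeriv s (phiFn σ) ((n:ℝ) * x - k) := by
  induction s generalizing x with
  | zero => simp
  | succ s ih =>
    have hsm : s ≤ m := le_trans (Nat.le_succ s) hs
    have hslt : (s : WithTop ℕ∞) < (m : WithTop ℕ∞) := by exact_mod_cast Nat.lt_of_succ_le hs
    have hdiff : Differentiable ℝ (iteratedDeriv s (phiFn σ)) :=
      (phi_contDiff hσC).differentiable_iteratedDeriv s hslt
    rw [iteratedDeriv_succ]
    have hfun : iteratedDeriv s (fun y => ∑ k ∈ Λ, cf k * phiFn σ ((n:ℝ) * y - k))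
        = fun x => (n:ℝ)^s * ∑ k ∈ Λ, cf k * iteratedDeriv s (phiFn σ) ((n:ℝ) * x - k) :=
      funext (fun x => ih hsm x)
    rw [hfun]
    have hterm : ∀ k ∈ Λ, HasDerivAt (fun x : ℝ => cf k * iteratedDeriv s (phiFn σ) ((n:ℝ)*x - k))
        ((n:ℝ) * (cf k * iteratedDeriv (s+1) (phiFn σ) ((n:ℝ)*x - k))) x := by
      intro k _
      have hin : HasDerivAt (fun x : ℝ => (n:ℝ)*x - k) (n:ℝ) x := by
        simpa using ((hasDerivAt_id x).const_mul (n:ℝ)).sub_const (k:ℝ)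
      have hbase : HasDerivAt (iteratedDeriv s (phiFn σ))
          (iteratedDeriv (s+1) (phiFn σ) ((n:ℝ)*x - k)) ((n:ℝ)*x - k) := by
        have := (hdiff ((n:ℝ)*x - k)).hasDerivAt
        rwa [iteratedDeriv_succ]
      have := (hbase.comp x hin).const_mul (cf k)
      exact this.congr_deriv (by ring)
    have hsum : HasDerivAt (fun x : ℝ => ∑ k ∈ Λ, cf k * iteratedDeriv s (phiFn σ) ((n:ℝ)*x - k))
        (∑ k ∈ Λ, (n:ℝ) * (cf k * iteratedDeriv (s+1) (phiFn σ) ((n:ℝ)*x - k))) x :=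
      HasDerivAt.fun_sum hterm
    have := (hsum.const_mul ((n:ℝ)^s)).deriv
    rw [this, Finset.mul_sum]
    rw [Finset.mul_sum, pow_succ]
    apply Finset.sum_congr rfl
    intro k _
    ring

end FinDeriv

section Taylor

lemma taylor_omega {a b : ℝ} (hab : a < b) :
    ∀ (q : ℕ) (f : ℝ → ℝ), ContDiffOn ℝ q f (Set.Icc a b) → ∀ ε : ℝ, 0 < ε → ∃ h₀ > 0,
      ∀ x ∈ Set.Icc a b, ∀ u ∈ Set.Icc a b, |u - x| ≤ h₀ →
        |f u - ∑ i ∈ Finset.range (q+1),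
            iteratedDerivWithin i f (Set.Icc a b) x * (u - x)^i / (i.factorial : ℝ)|
          ≤ ε * |u - x| ^ q := by
  have hUD : UniqueDiffOn ℝ (Set.Icc a b) := uniqueDiffOn_Icc hab
  intro q
  induction q with
  | zero =>
    intro f hf ε hε
    have hucont : UniformContinuousOn f (Set.Icc a b) :=
      isCompact_Icc.uniformContinuousOn_of_continuous hf.continuousOn
    obtain ⟨d, hd, hdp⟩ := Metric.uniformContinuousOn_iff.1 hucont ε hε
    refine ⟨d/2, by linarith, fun x hx u hu hclose => ?_⟩
    have := hdp u hu x hx (by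
      rw [Real.dist_eq]; linarith)
    rw [Real.dist_eq] at this
    simpa [iteratedDerivWithin_zero] using (le_of_lt this)
  | succ q ih =>
    intro f hf ε hε
    set f₁ := derivWithin f (Set.Icc a b) with hf₁def
    have hf₁ : ContDiffOn ℝ q f₁ (Set.Icc a b) := hf.derivWithin hUD (by exact_mod_cast le_refl (q+1))
    obtain ⟨h₀, hh₀, hIH⟩ := ih f₁ hf₁ ε hε
    refine ⟨h₀, hh₀, fun x hx u hu hclose => ?_⟩
    set c : ℕ → ℝ := fun i => iteratedDerivWithin i f (Set.Icc a b) x with hc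
    set F : ℝ → ℝ := fun t => f t - ∑ i ∈ Finset.range (q+2), c i * (t - x)^i / (i.factorial : ℝ)
      with hF
    set R : ℝ → ℝ := fun t => f₁ t - ∑ i ∈ Finset.range (q+1),
        iteratedDerivWithin i f₁ (Set.Icc a b) x * (t - x)^i / (i.factorial : ℝ) with hR
    have hF' : ∀ t ∈ Set.Icc a b, HasDerivWithinAt F (R t) (Set.Icc a b) t := by
      intro t ht
      have hdf : HasDerivWithinAt f (f₁ t) (Set.Icc a b) t :=
        (hf.differentiableOn (by simp) t ht).hasDerivWithinAt
      have hPEach : ∀ i ∈ Finset.range (q+2),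
          HasDerivAt (fun t : ℝ => c i * (t - x)^i / (i.factorial : ℝ))
            (c i * ((i:ℝ) * (t - x)^(i-1)) / (i.factorial : ℝ)) t := by
        intro i _
        have hpow : HasDerivAt (fun t : ℝ => (t - x)^i) ((i:ℝ) * (t - x)^(i-1)) t := by
          have := (hasDerivAt_pow i (t - x)).comp t ((hasDerivAt_id t).sub_const x)
          simpa [Function.comp_def] using this
        exact (hpow.const_mul (c i)).div_const _
      have hP : HasDerivAt (fun t : ℝ => ∑ i ∈ Finset.range (q+2), c i * (t - x)^i / (i.factorial : ℝ))
          (∑ i ∈ Finset.range (q+2), c i * ((i:ℝ) * (t - x)^(i-1)) / (i.factorial : ℝ)) t :=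
        HasDerivAt.fun_sum hPEach
      have hre : ∑ i ∈ Finset.range (q+2), c i * ((i:ℝ) * (t - x)^(i-1)) / (i.factorial : ℝ)
          = ∑ i ∈ Finset.range (q+1),
              iteratedDerivWithin i f₁ (Set.Icc a b) x * (t - x)^i / (i.factorial : ℝ) := by
        rw [Finset.sum_range_succ']
        simp only [Nat.cast_zero, zero_mul, mul_zero, zero_div, add_zero]
        apply Finset.sum_congr rfl
        intro i _
        have hsucc : c (i+1) = iteratedDerivWithin i f₁ (Set.Icc a b) x := by
          rw [hc]
          exact congrFun iteratedDerivWithin_succ' x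
        rw [hsucc, Nat.factorial_succ]
        have h1 : ((i+1:ℕ):ℝ) ≠ 0 := by positivity
        have h2 : ((i.factorial:ℕ):ℝ) ≠ 0 := by positivity
        push_cast
        field_simp
      rw [hre] at hP
      exact hdf.sub hP.hasDerivWithinAt
    have hFx : F x = 0 := by
      rw [hF]
      simp only
      rw [Finset.sum_eq_single_of_mem 0 (Finset.mem_range.2 (by omega))]
      · simp [hc, iteratedDerivWithin_zero]
      · intro i _ hi
        simp [sub_self, zero_pow hi]
    -- segment argument
    set s' : Set ℝ := Set.uIcc x u with hs'
    have hsub : s' ⊆ Set.Icc a b := Set.uIcc_subset_Icc hx hu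
    have habs : ∀ t ∈ s', |t - x| ≤ |u - x| := by
      intro t ht
      rcases Set.mem_uIcc.1 ht with ⟨h1, h2⟩ | ⟨h1, h2⟩
      · rw [abs_of_nonneg (by linarith)]
        calc t - x ≤ u - x := by linarith
          _ ≤ |u - x| := le_abs_self _
      · rw [abs_of_nonpos (by linarith)]
        calc -(t - x) ≤ -(u - x) := by linarith
          _ ≤ |u - x| := neg_le_abs _
    have hbound : ∀ t ∈ s', ‖R t‖ ≤ ε * |u - x| ^ q := by
      intro t ht
      have ht' := hsub ht
      have := hIH x hx t ht' (le_trans (habs t ht) hclose)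
      rw [Real.norm_eq_abs, hR]
      refine le_trans this ?_
      apply mul_le_mul_of_nonneg_left _ hε.le
      exact pow_le_pow_left₀ (abs_nonneg _) (habs t ht) q
    have key := Convex.norm_image_sub_le_of_norm_hasDerivWithin_le
      (fun t ht => (hF' t (hsub ht)).mono hsub) hbound (convex_uIcc x u)
      Set.left_mem_uIcc Set.right_mem_uIcc
    rw [hFx, sub_zero, Real.norm_eq_abs, Real.norm_eq_abs] at key
    have : F u = f u - ∑ i ∈ Finset.range (q+2),
        c i * (u - x)^i / (i.factorial : ℝ) := rfl
    rw [this] at key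
    calc |f u - ∑ i ∈ Finset.range (q+1+1),
        iteratedDerivWithin i f (Set.Icc a b) x * (u - x)^i / (i.factorial : ℝ)|
        = |f u - ∑ i ∈ Finset.range (q+2), c i * (u - x)^i / (i.factorial : ℝ)| := rfl
      _ ≤ ε * |u - x| ^ q * |u - x| := key
      _ = ε * |u - x| ^ (q+1) := by rw [pow_succ]; ring

end Taylor

/-- Difference between a finite partial sum and the full tsum, bounded by a tail majorant. -/
lemma sum_sub_tsum_le (F H : ℤ → ℝ) (hF : Summable (fun k => |F k|)) (Λ : Finset ℤ)
    (hH : ∀ k ∉ Λ, |F k| ≤ H k) (hH0 : ∀ k, 0 ≤ H k) (hHsum : Summable H) :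
    |∑ k ∈ Λ, F k - ∑' k : ℤ, F k| ≤ ∑' k : ℤ, H k := by
  have hF' : Summable F := hF.of_abs
  have hsplit := hF'.sum_add_tsum_subtype_compl Λ
  have heq : ∑ k ∈ Λ, F k - ∑' k : ℤ, F k = -(∑' x : {x // x ∉ Λ}, F x) := by
    rw [← hsplit]; ring
  rw [heq, abs_neg]
  have h1 : |∑' x : {x // x ∉ Λ}, F x| ≤ ∑' x : {x // x ∉ Λ}, |F x| := by
    have := norm_tsum_le_tsum_norm (f := fun x : {x // x ∉ Λ} => F x)
      ((hF.subtype _))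
    simpa [Real.norm_eq_abs] using this
  have h2 : ∑' x : {x // x ∉ Λ}, |F x| ≤ ∑' x : {x // x ∉ Λ}, H x :=
    Summable.tsum_le_tsum (fun x => hH x x.2) (hF.subtype _) (hHsum.subtype _)
  have h3 : ∑' x : {x // x ∉ Λ}, H x ≤ ∑' k : ℤ, H k := by
    have e : ∑' x : {x // x ∉ Λ}, H x = ∑' k : ℤ, Set.indicator {i : ℤ | i ∉ Λ} H k :=
      tsum_subtype {i : ℤ | i ∉ Λ} H
    rw [e]
    exact Summable.tsum_le_tsum (fun k => Set.indicator_le_self' (fun x _ => hH0 x) k)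
      (hHsum.indicator _) hHsum
  linarith

end SA

set_option maxHeartbeats 2000000 in
theorem simultaneous_approximation (σ : ℝ → ℝ) (α β : ℝ) (m : ℕ) (K C : ℕ → ℝ) (A : ℕ → ℝ)
    (hσ : Sigmoidal σ) (hmono : Monotone σ) (h1 : Sigma1 σ) (h2 : Sigma2 σ) (h3 : Sigma3 σ α)
    (h4 : Sigma4 σ m β K C) (h5 : Sigma5 σ m A)
    (hβ : 2 * (m : ℝ) < β) (hα : (m : ℝ) + 1 < α)
    (a b : ℤ) (hab : a < b) (δ : ℝ) (hδ : 0 < δ) (hδ2 : (a : ℝ) + δ < (b : ℝ) - δ)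
    (f : ℝ → ℝ) (hf : ContDiffOn ℝ m f (Set.Icc (a : ℝ) (b : ℝ)))
    (s : ℕ) (hs1 : 1 ≤ s) (hsm : s ≤ m) :
    TendstoUniformlyOn
      (fun (n : ℕ) (x : ℝ) => iteratedDeriv s (fun y => Ftil σ f a b n y) x)
      (fun x : ℝ => iteratedDerivWithin s f (Set.Icc (a : ℝ) (b : ℝ)) x) atTop
      (Set.Icc ((a : ℝ) + δ) ((b : ℝ) - δ)) := by
  classical
  have hab' : (a:ℝ) < b := by exact_mod_cast hab
  have hsm : s ≤ m := hsm
  set S : Set ℝ := Set.Icc (a:ℝ) (b:ℝ) with hSdef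
  set g : ℕ → ℝ → ℝ := fun j => iteratedDerivWithin j f S with hgdef
  obtain ⟨c, Kc, p, hc, hKc, hpm, hpβ, hdec⟩ := SA.psi_decay hσ hmono h1 h3 h4 hsm hα
  have hpval : p = β + 1 := hpβ hs1
  subst hpval
  set Ψ : ℝ → ℝ := iteratedDeriv s (phiFn σ) with hΨdef
  have hcontΨ : Continuous Ψ :=
    (SA.phi_contDiff h4.2.2.1).continuous_iteratedDeriv s (by exact_mod_cast hsm)
  have hβm1 : (m:ℝ) + 1 < β := h4.2.1
  have hm0 : (0:ℝ) ≤ m := Nat.cast_nonneg m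
  set τ : ℝ := β/2 with hτdef
  have hτpos : 0 < τ := by rw [hτdef]; linarith
  have hmτ : (m:ℝ) < τ := by rw [hτdef]; linarith
  -- moment values
  have hMom : ∀ j : ℕ, j ≤ m → ∀ u : ℝ,
      HasSum (fun k : ℤ => Ψ (u - k) * ((k:ℝ) - u)^j) (SA.momVal A s j) := fun j hj u =>
    SA.hasSum_moments hσ hmono h1 h3 h4 h5 hα s hsm j hj u
  -- tail constants for each order j
  have hTailEx : ∀ j : ℕ, ∃ c' : ℝ, 0 ≤ c' ∧ (j ≤ m → ∀ (u M' : ℝ), max (2*Kc) 4 ≤ M' →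
      ∀ (P : ℤ → Prop) (_ : DecidablePred P), (∀ k, P k → M' ≤ |u - k|) →
      (Summable fun k : ℤ => if P k then |Ψ (u - k)| * |u - (k:ℝ)| ^ j else 0) ∧
      ∑' k : ℤ, (if P k then |Ψ (u - k)| * |u - (k:ℝ)| ^ j else 0) ≤ c' * M' ^ (-τ)) := by
    intro j
    by_cases hj : j ≤ m
    · have hjm : (j:ℝ) ≤ m := by exact_mod_cast hj
      obtain ⟨c', hc'0, hc'⟩ := SA.tail_bound (τ := τ) hcontΨ hc hKc (by linarith) hτpos
        (by rw [hτdef]; linarith) hdec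
      exact ⟨c', hc'0, fun _ => hc'⟩
    · exact ⟨0, le_refl 0, fun h => absurd h hj⟩
  choose cT hcT0 hcT using hTailEx
  -- uniform absolute moment of order m
  obtain ⟨Dm, hDm0, hDm⟩ := SA.abs_moment_bound (j := m) hcontΨ hc hKc (by linarith) hdec
  -- bound on the derivatives of f
  have hgbound : ∃ M : ℝ, 1 ≤ M ∧ ∀ j : ℕ, j ≤ m → ∀ y ∈ S, |g j y| ≤ M := by
    have hcg : ∀ j : ℕ, j ≤ m → ∃ Mj : ℝ, ∀ y ∈ S, |g j y| ≤ Mj := by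
      intro j hj
      have : ContinuousOn (g j) S := by
        rw [hgdef]
        exact hf.continuousOn_iteratedDerivWithin (by exact_mod_cast hj)
          (uniqueDiffOn_Icc hab')
      obtain ⟨Mj, hMj⟩ := isCompact_Icc.exists_bound_of_continuousOn this
      exact ⟨Mj, fun y hy => hMj y hy⟩
    choose! Mf hMf using hcg
    refine ⟨1 + ∑ j ∈ Finset.range (m+1), max (Mf j) 0, ?_, ?_⟩
    · have : 0 ≤ ∑ j ∈ Finset.range (m+1), max (Mf j) 0 :=
        Finset.sum_nonneg (fun j _ => le_max_right _ _)
      linarith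
    · intro j hj y hy
      have h1 : |g j y| ≤ Mf j := hMf j hj y hy
      have h2 : max (Mf j) 0 ≤ ∑ i ∈ Finset.range (m+1), max (Mf i) 0 :=
        Finset.single_le_sum (f := fun i => max (Mf i) 0) (fun i _ => le_max_right _ _) (Finset.mem_range.2 (Nat.lt_succ_of_le hj))
      have h3 : Mf j ≤ max (Mf j) 0 := le_max_left _ _
      linarith
  obtain ⟨M, hM1, hMg⟩ := hgbound
  rw [Metric.tendstoUniformlyOn_iff]
  intro ε hε
  set ε' : ℝ := ε/(4*(Dm+1)) with hε'def
  have hε'pos : 0 < ε' := by rw [hε'def]; positivity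
  obtain ⟨h₀, hh₀, hTay⟩ := SA.taylor_omega hab' m f hf ε' hε'pos
  set B : ℝ := M + M * ∑ j ∈ Finset.range (m+1), ((b:ℝ)-a)^j with hBdef
  have hB0 : 0 ≤ B := by
    rw [hBdef]
    have : (0:ℝ) ≤ ∑ j ∈ Finset.range (m+1), ((b:ℝ)-a)^j :=
      Finset.sum_nonneg (fun j _ => pow_nonneg (by linarith) j)
    nlinarith
  set CT : ℝ := ∑ j ∈ Finset.range (m+1), cT j with hCTdef
  have hCT0 : 0 ≤ CT := Finset.sum_nonneg (fun j _ => hcT0 j)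
  set CC1 : ℝ := M * CT * δ^(-τ) + B * cT 0 * h₀^(-τ) with hCC1def
  have hCC10 : 0 ≤ CC1 := by
    have h1 : (0:ℝ) ≤ δ^(-τ) := Real.rpow_nonneg hδ.le _
    have h2 : (0:ℝ) ≤ h₀^(-τ) := Real.rpow_nonneg hh₀.le _
    have := hcT0 0
    rw [hCC1def]
    positivity
  set CC2 : ℝ := ∑ j ∈ Finset.range (m+1), M * |SA.momVal A s j| with hCC2def
  have hCC20 : 0 ≤ CC2 := Finset.sum_nonneg (fun j _ => by positivity)
  -- eventual smallness
  have hγ : (0:ℝ) < τ - m := by linarith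
  have et1 : Tendsto (fun n : ℕ => CC1 * (n:ℝ)^((m:ℝ)-τ)) atTop (𝓝 0) := by
    have h1 : Tendsto (fun y : ℝ => y^(-(τ-(m:ℝ)))) atTop (𝓝 0) := tendsto_rpow_neg_atTop hγ
    have h2 : Tendsto (fun n : ℕ => ((n:ℝ))^((m:ℝ)-τ)) atTop (𝓝 0) := by
      have := h1.comp tendsto_natCast_atTop_atTop
      simpa [neg_sub, Function.comp_def] using this
    simpa using h2.const_mul CC1
  have e1 : ∀ᶠ n : ℕ in atTop, CC1 * (n:ℝ)^((m:ℝ)-τ) < ε/4 :=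
    et1.eventually_lt_const (by linarith)
  have e2 : ∀ᶠ n : ℕ in atTop, CC2 / n < ε/4 :=
    (tendsto_const_div_atTop_nhds_zero_nat CC2).eventually_lt_const (by linarith)
  have e3 : ∀ᶠ n : ℕ in atTop, max (2*Kc) 4 ≤ (n:ℝ)*δ :=
    (Tendsto.atTop_mul_const hδ tendsto_natCast_atTop_atTop).eventually_ge_atTop _
  have e4 : ∀ᶠ n : ℕ in atTop, max (2*Kc) 4 ≤ (n:ℝ)*h₀ :=
    (Tendsto.atTop_mul_const hh₀ tendsto_natCast_atTop_atTop).eventually_ge_atTop _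
  have e5 : ∀ᶠ n : ℕ in atTop, 1 ≤ n := eventually_ge_atTop 1
  filter_upwards [e1, e2, e3, e4, e5] with n hn1 hn2 hn3 hn4 hn5
  intro x hx
  have hn0 : (0:ℝ) < n := by exact_mod_cast hn5
  have hn0' : (n:ℝ) ≠ 0 := ne_of_gt hn0
  have hn1R : (1:ℝ) ≤ n := by exact_mod_cast hn5
  have hxS : x ∈ S := ⟨by linarith [hx.1], by linarith [hx.2]⟩
  set u : ℝ := (n:ℝ) * x with hudef
  set Λ : Finset ℤ := Finset.Icc ((n:ℤ)*a) ((n:ℤ)*b) with hΛdef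
  have hkS : ∀ k ∈ Λ, (k:ℝ)/n ∈ S := by
    intro k hk
    rw [hΛdef, Finset.mem_Icc] at hk
    have h1 : (((n:ℤ)*a : ℤ) : ℝ) ≤ (k:ℝ) := by exact_mod_cast hk.1
    have h2 : (k:ℝ) ≤ (((n:ℤ)*b : ℤ) : ℝ) := by exact_mod_cast hk.2
    push_cast at h1 h2
    constructor
    · rw [le_div_iff₀ hn0]; linarith
    · rw [div_le_iff₀ hn0]; linarith
  have hout : ∀ k : ℤ, k ∉ Λ → (n:ℝ)*δ ≤ |u - k| := by
    intro k hk
    rw [hΛdef, Finset.mem_Icc, not_and_or, not_le, not_le] at hk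
    have hexp : (n:ℝ)*((a:ℝ)+δ) = (n:ℝ)*a + (n:ℝ)*δ := by ring
    have hexp2 : (n:ℝ)*((b:ℝ)-δ) = (n:ℝ)*b - (n:ℝ)*δ := by ring
    rcases hk with hk | hk
    · have hkk : (k:ℝ) + 1 ≤ (n:ℝ)*a := by
        have h' : (k + 1 : ℤ) ≤ (n:ℤ)*a := hk
        have h'' : ((k + 1 : ℤ) : ℝ) ≤ (((n:ℤ)*a : ℤ) : ℝ) := by exact_mod_cast h'
        push_cast at h''
        linarith
      have hu : (n:ℝ)*((a:ℝ)+δ) ≤ u := by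
        rw [hudef]; exact mul_le_mul_of_nonneg_left hx.1 hn0.le
      have : (n:ℝ)*δ ≤ u - k := by linarith
      exact this.trans (le_abs_self _)
    · have hkk : (n:ℝ)*b + 1 ≤ (k:ℝ) := by
        have h' : (n:ℤ)*b + 1 ≤ k := hk
        have h'' : (((n:ℤ)*b + 1 : ℤ) : ℝ) ≤ ((k:ℤ) : ℝ) := by exact_mod_cast h'
        push_cast at h''
        linarith
      have hu : u ≤ (n:ℝ)*((b:ℝ)-δ) := by
        rw [hudef]; exact mul_le_mul_of_nonneg_left hx.2 hn0.le
      have h5 : (n:ℝ)*δ ≤ (k:ℝ) - u := by linarith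
      calc (n:ℝ)*δ ≤ (k:ℝ) - u := h5
        _ ≤ |(k:ℝ) - u| := le_abs_self _
        _ = |u - k| := abs_sub_comm _ _
  -- the derivative of the operator
  have hDeriv : iteratedDeriv s (fun y => Ftil σ f a b n y) x
      = (n:ℝ)^s * ∑ k ∈ Λ, f ((k:ℝ)/n) * Ψ (u - k) := by
    have h := SA.iteratedDeriv_finsum h4.2.2.1 hsm Λ (fun k => f ((k:ℝ)/n)) n x
    rw [hudef]
    exact h
  set T : ℕ → ℝ := fun j => ∑ k ∈ Λ, Ψ (u - k) * ((k:ℝ) - u)^j with hTdef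
  set rr : ℤ → ℝ := fun k => f ((k:ℝ)/n)
    - ∑ j ∈ Finset.range (m+1), g j x * ((k:ℝ)/n - x)^j / (j.factorial:ℝ) with hrdef
  have hkne : ∀ j : ℕ, ((j.factorial:ℕ):ℝ) ≠ 0 := fun j => by positivity
  have hdecomp : (n:ℝ)^s * ∑ k ∈ Λ, f ((k:ℝ)/n) * Ψ (u - k)
      = (∑ j ∈ Finset.range (m+1), (g j x / (j.factorial:ℝ)) * ((n:ℝ)^s/(n:ℝ)^j) * T j)
        + (n:ℝ)^s * ∑ k ∈ Λ, rr k * Ψ (u - k) := by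
    have hsplit_k : ∀ k ∈ Λ, f ((k:ℝ)/n) * Ψ (u - k)
        = (∑ j ∈ Finset.range (m+1), g j x * ((k:ℝ)/n - x)^j / (j.factorial:ℝ) * Ψ (u - k))
          + rr k * Ψ (u - k) := by
      intro k _
      rw [hrdef, ← Finset.sum_mul]
      ring
    rw [Finset.sum_congr rfl hsplit_k, Finset.sum_add_distrib, mul_add]
    congr 1
    rw [Finset.mul_sum]
    have hswap : ∀ k ∈ Λ, (n:ℝ)^s * (∑ j ∈ Finset.range (m+1),
          g j x * ((k:ℝ)/n - x)^j / (j.factorial:ℝ) * Ψ (u - k))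
        = ∑ j ∈ Finset.range (m+1),
            (n:ℝ)^s * (g j x * ((k:ℝ)/n - x)^j / (j.factorial:ℝ) * Ψ (u - k)) := by
      intro k _; rw [Finset.mul_sum]
    rw [Finset.sum_congr rfl hswap, Finset.sum_comm]
    apply Finset.sum_congr rfl
    intro j _
    rw [hTdef]
    simp only
    rw [Finset.mul_sum]
    apply Finset.sum_congr rfl
    intro k _
    have hkx : (k:ℝ)/n - x = ((k:ℝ) - u)/n := by
      rw [hudef]; field_simp
    rw [hkx, div_pow]
    have hnj : ((n:ℝ)^j) ≠ 0 := pow_ne_zero _ hn0'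
    field_simp
  -- tail estimates for truncated moments
  have hE1 : ∀ j ∈ Finset.range (m+1),
      |T j - SA.momVal A s j| ≤ cT j * ((n:ℝ)*δ)^(-τ) := by
    intro j hj
    have hjm : j ≤ m := by have := Finset.mem_range.1 hj; omega
    have hjR : (j:ℝ) ≤ m := by exact_mod_cast hjm
    obtain ⟨Dj, hDj0, hDj⟩ := SA.abs_moment_bound (j := j) hcontΨ hc hKc (by linarith) hdec
    have habs : Summable (fun k : ℤ => |Ψ (u - k) * ((k:ℝ) - u)^j|) := by
      apply Summable.congr (hDj u).1
      intro k
      rw [abs_mul, abs_pow, abs_sub_comm (k:ℝ) u]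
    obtain ⟨hHsum, hHle⟩ := hcT j hjm u ((n:ℝ)*δ) hn3 (fun k => k ∉ Λ)
      (fun k => inferInstance) hout
    have hkey := SA.sum_sub_tsum_le (fun k => Ψ (u - k) * ((k:ℝ) - u)^j)
      (fun k => if k ∉ Λ then |Ψ (u - k)| * |u - (k:ℝ)|^j else 0) habs Λ
      (fun k hk => by
        show |Ψ (u - k) * ((k:ℝ) - u)^j| ≤ if k ∉ Λ then |Ψ (u - k)| * |u - (k:ℝ)|^j else 0
        rw [if_pos hk, abs_mul, abs_pow, abs_sub_comm (k:ℝ) u])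
      (fun k => by
        show (0:ℝ) ≤ if k ∉ Λ then |Ψ (u - k)| * |u - (k:ℝ)|^j else 0
        split_ifs <;> positivity) hHsum
    have htsum : ∑' k : ℤ, Ψ (u - k) * ((k:ℝ) - u)^j = SA.momVal A s j :=
      (hMom j hjm u).tsum_eq
    rw [htsum] at hkey
    exact hkey.trans hHle
  -- middle term
  have hMid : |(∑ j ∈ Finset.range (m+1),
        (g j x / (j.factorial:ℝ)) * ((n:ℝ)^s/(n:ℝ)^j) * SA.momVal A s j) - g s x|
      ≤ CC2 / n := by
    have hsmem : s ∈ Finset.range (m+1) := Finset.mem_range.2 (Nat.lt_succ_of_le hsm)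
    rw [← Finset.sum_erase_add _ _ hsmem]
    have hterm_s : (g s x / (s.factorial:ℝ)) * ((n:ℝ)^s/(n:ℝ)^s) * SA.momVal A s s
        = g s x := by
      have h1 : SA.momVal A s s = (s.factorial : ℝ) := by
        unfold SA.momVal SA.Aex
        rw [if_pos (le_refl s), Nat.sub_self, if_pos rfl, Nat.descFactorial_self, mul_one]
      rw [h1, div_self (pow_ne_zero s hn0')]
      field_simp
    rw [hterm_s, add_sub_cancel_right]
    have hterm : ∀ j ∈ (Finset.range (m+1)).erase s,
        |(g j x / (j.factorial:ℝ)) * ((n:ℝ)^s/(n:ℝ)^j) * SA.momVal A s j|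
          ≤ M * |SA.momVal A s j| / n := by
      intro j hj
      obtain ⟨hjs, hjr⟩ := Finset.mem_erase.1 hj
      have hjm : j ≤ m := by have := Finset.mem_range.1 hjr; omega
      rcases lt_or_gt_of_ne hjs with hlt | hgt
      · -- j < s : moment vanishes
        have : SA.momVal A s j = 0 := by
          unfold SA.momVal
          rw [if_neg (by omega)]
        rw [this]
        simp only [mul_zero, abs_zero]
        positivity
      · -- j > s
        have hq : |(n:ℝ)^s/(n:ℝ)^j| ≤ 1/n := by
          rw [abs_of_pos (by positivity), div_le_div_iff₀ (by positivity) hn0]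
          calc (n:ℝ)^s * n = (n:ℝ)^(s+1) := by rw [pow_succ]
            _ ≤ (n:ℝ)^j := pow_le_pow_right₀ hn1R (by omega)
            _ = 1 * (n:ℝ)^j := by ring
        have hfact : (1:ℝ) ≤ |(j.factorial:ℝ)| := by
          rw [abs_of_pos (by positivity)]
          exact_mod_cast Nat.one_le_iff_ne_zero.2 (Nat.factorial_ne_zero j)
        have hgf : |g j x / (j.factorial:ℝ)| ≤ M := by
          rw [abs_div]
          exact le_trans (div_le_self (abs_nonneg _) hfact) (hMg j hjm x hxS)
        rw [abs_mul, abs_mul]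
        calc |g j x / (j.factorial:ℝ)| * |(n:ℝ)^s/(n:ℝ)^j| * |SA.momVal A s j|
            ≤ M * (1/n) * |SA.momVal A s j| := by
              apply mul_le_mul_of_nonneg_right _ (abs_nonneg _)
              exact mul_le_mul hgf hq (abs_nonneg _) (by linarith)
          _ = M * |SA.momVal A s j| / n := by ring
    calc |∑ j ∈ (Finset.range (m+1)).erase s,
          (g j x / (j.factorial:ℝ)) * ((n:ℝ)^s/(n:ℝ)^j) * SA.momVal A s j|
        ≤ ∑ j ∈ (Finset.range (m+1)).erase s,
            |(g j x / (j.factorial:ℝ)) * ((n:ℝ)^s/(n:ℝ)^j) * SA.momVal A s j| :=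
          Finset.abs_sum_le_sum_abs _ _
      _ ≤ ∑ j ∈ (Finset.range (m+1)).erase s, M * |SA.momVal A s j| / n :=
          Finset.sum_le_sum hterm
      _ ≤ ∑ j ∈ Finset.range (m+1), M * |SA.momVal A s j| / n := by
          apply Finset.sum_le_sum_of_subset_of_nonneg (Finset.erase_subset _ _)
          intro j _ _; positivity
      _ = CC2 / n := by rw [hCC2def, Finset.sum_div]
  -- remainder
  have hRem : (n:ℝ)^s * |∑ k ∈ Λ, rr k * Ψ (u - k)|
      ≤ ε' * Dm + B * cT 0 * h₀^(-τ) * (n:ℝ)^((m:ℝ)-τ) := by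
    have habsle : |∑ k ∈ Λ, rr k * Ψ (u - k)| ≤ ∑ k ∈ Λ, |rr k| * |Ψ (u - k)| := by
      refine (Finset.abs_sum_le_sum_abs _ _).trans (le_of_eq ?_)
      exact Finset.sum_congr rfl (fun k _ => abs_mul _ _)
    set Pn : ℤ → Prop := fun k => |u - k| ≤ (n:ℝ)*h₀ with hPndef
    have hsplit := Finset.sum_filter_add_sum_filter_not Λ Pn (fun k => |rr k| * |Ψ (u - k)|)
    have hrr_bound : ∀ k ∈ Λ, |rr k| ≤ B := by
      intro k hk
      have hkS' := hkS k hk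
      have hf0 : |f ((k:ℝ)/n)| ≤ M := by
        have := hMg 0 (Nat.zero_le m) ((k:ℝ)/n) hkS'
        simpa [hgdef, iteratedDerivWithin_zero] using this
      have hsum_b : |∑ j ∈ Finset.range (m+1), g j x * ((k:ℝ)/n - x)^j / (j.factorial:ℝ)|
          ≤ M * ∑ j ∈ Finset.range (m+1), ((b:ℝ)-a)^j := by
        refine (Finset.abs_sum_le_sum_abs _ _).trans ?_
        rw [Finset.mul_sum]
        apply Finset.sum_le_sum
        intro j hj
        have hjm : j ≤ m := by have := Finset.mem_range.1 hj; omega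
        have h1 : |g j x| ≤ M := hMg j hjm x hxS
        have hdist : |(k:ℝ)/n - x| ≤ (b:ℝ) - a := by
          rw [abs_le]
          constructor
          · have p1 := hkS'.1; have p2 := hxS.2; linarith
          · have p1 := hkS'.2; have p2 := hxS.1; linarith
        have hfact : (1:ℝ) ≤ (j.factorial:ℝ) := by
          exact_mod_cast Nat.one_le_iff_ne_zero.2 (Nat.factorial_ne_zero j)
        calc |g j x * ((k:ℝ)/n - x)^j / (j.factorial:ℝ)|
            = |g j x| * |(k:ℝ)/n - x|^j / (j.factorial:ℝ) := by
              rw [abs_div, abs_mul, abs_pow,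
                abs_of_pos (show (0:ℝ) < (j.factorial:ℝ) from by positivity)]
          _ ≤ |g j x| * |(k:ℝ)/n - x|^j := div_le_self (by positivity) hfact
          _ ≤ M * ((b:ℝ)-a)^j := by
              apply mul_le_mul h1 (pow_le_pow_left₀ (abs_nonneg _) hdist j) (by positivity)
              linarith
      have : |rr k| ≤ |f ((k:ℝ)/n)|
          + |∑ j ∈ Finset.range (m+1), g j x * ((k:ℝ)/n - x)^j / (j.factorial:ℝ)| := by
        rw [hrdef]
        exact abs_sub _ _
      rw [hBdef]
      linarith
    have hnear : ∑ k ∈ Λ.filter Pn, |rr k| * |Ψ (u - k)| ≤ (ε'/(n:ℝ)^m) * Dm := by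
      have hterm : ∀ k ∈ Λ.filter Pn, |rr k| * |Ψ (u - k)|
          ≤ (ε'/(n:ℝ)^m) * (|Ψ (u - k)| * |u - (k:ℝ)|^m) := by
        intro k hk
        obtain ⟨hkΛ, hPk⟩ := Finset.mem_filter.1 hk
        have hPk' : |u - (k:ℝ)| ≤ (n:ℝ)*h₀ := hPk
        have hkx : |(k:ℝ)/n - x| = |u - (k:ℝ)|/n := by
          have he : (k:ℝ)/n - x = -((u - (k:ℝ))/n) := by
            rw [hudef]; field_simp; ring
          rw [he, abs_neg, abs_div, abs_of_pos hn0]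
        have hclose : |(k:ℝ)/n - x| ≤ h₀ := by
          rw [hkx, div_le_iff₀ hn0]
          linarith
        have htay := hTay x hxS ((k:ℝ)/n) (hkS k hkΛ) hclose
        have hrk : |rr k| ≤ ε' * (|u - (k:ℝ)|/n)^m := by
          rw [← hkx]
          exact htay
        calc |rr k| * |Ψ (u - k)| ≤ (ε' * (|u - (k:ℝ)|/n)^m) * |Ψ (u - k)| :=
              mul_le_mul_of_nonneg_right hrk (abs_nonneg _)
          _ = (ε'/(n:ℝ)^m) * (|Ψ (u - k)| * |u - (k:ℝ)|^m) := by
              rw [div_pow]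
              field_simp
      calc ∑ k ∈ Λ.filter Pn, |rr k| * |Ψ (u - k)|
          ≤ ∑ k ∈ Λ.filter Pn, (ε'/(n:ℝ)^m) * (|Ψ (u - k)| * |u - (k:ℝ)|^m) :=
            Finset.sum_le_sum hterm
        _ = (ε'/(n:ℝ)^m) * ∑ k ∈ Λ.filter Pn, (|Ψ (u - k)| * |u - (k:ℝ)|^m) := by
            rw [← Finset.mul_sum]
        _ ≤ (ε'/(n:ℝ)^m) * Dm := by
            apply mul_le_mul_of_nonneg_left _ (by positivity)
            calc ∑ k ∈ Λ.filter Pn, (|Ψ (u - k)| * |u - (k:ℝ)|^m)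
                ≤ ∑' k : ℤ, |Ψ (u - k)| * |u - (k:ℝ)|^m :=
                  Summable.sum_le_tsum _ (fun k _ => by positivity) (hDm u).1
              _ ≤ Dm := (hDm u).2
    obtain ⟨hQsum, hQle⟩ := hcT 0 (Nat.zero_le m) u ((n:ℝ)*h₀) hn4
      (fun k => ¬ Pn k) (fun k => inferInstance) (fun k hk => le_of_lt (not_le.1 hk))
    have hfar : ∑ k ∈ Λ.filter (fun k => ¬ Pn k), |rr k| * |Ψ (u - k)|
        ≤ B * (cT 0 * ((n:ℝ)*h₀)^(-τ)) := by
      have hterm : ∀ k ∈ Λ.filter (fun k => ¬ Pn k), |rr k| * |Ψ (u - k)|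
          ≤ B * (if ¬ Pn k then |Ψ (u - k)| * |u - (k:ℝ)|^0 else 0) := by
        intro k hk
        obtain ⟨hkΛ, hPk⟩ := Finset.mem_filter.1 hk
        rw [if_pos hPk, pow_zero, mul_one]
        exact mul_le_mul (hrr_bound k hkΛ) (le_refl _) (abs_nonneg _) hB0
      calc ∑ k ∈ Λ.filter (fun k => ¬ Pn k), |rr k| * |Ψ (u - k)|
          ≤ ∑ k ∈ Λ.filter (fun k => ¬ Pn k),
              B * (if ¬ Pn k then |Ψ (u - k)| * |u - (k:ℝ)|^0 else 0) :=
            Finset.sum_le_sum hterm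
        _ = B * ∑ k ∈ Λ.filter (fun k => ¬ Pn k),
              (if ¬ Pn k then |Ψ (u - k)| * |u - (k:ℝ)|^0 else 0) := by
            rw [← Finset.mul_sum]
        _ ≤ B * ∑' k : ℤ, (if ¬ Pn k then |Ψ (u - k)| * |u - (k:ℝ)|^0 else 0) := by
            apply mul_le_mul_of_nonneg_left _ hB0
            exact Summable.sum_le_tsum _ (fun k _ => by split_ifs <;> positivity) hQsum
        _ ≤ B * (cT 0 * ((n:ℝ)*h₀)^(-τ)) := mul_le_mul_of_nonneg_left hQle hB0
    have hcomb : ∑ k ∈ Λ, |rr k| * |Ψ (u - k)|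
        ≤ (ε'/(n:ℝ)^m) * Dm + B * (cT 0 * ((n:ℝ)*h₀)^(-τ)) := by
      rw [← hsplit]
      exact add_le_add hnear hfar
    have hfinal1 : (n:ℝ)^s * ((ε'/(n:ℝ)^m) * Dm) ≤ ε' * Dm := by
      have hns : (n:ℝ)^s ≤ (n:ℝ)^m := pow_le_pow_right₀ hn1R hsm
      have h1 : (n:ℝ)^s/(n:ℝ)^m ≤ 1 := by
        rw [div_le_one (by positivity)]; exact hns
      calc (n:ℝ)^s * ((ε'/(n:ℝ)^m) * Dm) = (ε' * Dm) * ((n:ℝ)^s/(n:ℝ)^m) := by ring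
        _ ≤ ε' * Dm := mul_le_of_le_one_right (by positivity) h1
    have hfinal2 : (n:ℝ)^s * (B * (cT 0 * ((n:ℝ)*h₀)^(-τ)))
        ≤ B * cT 0 * h₀^(-τ) * (n:ℝ)^((m:ℝ)-τ) := by
      rw [Real.mul_rpow hn0.le hh₀.le]
      have hns : (n:ℝ)^s ≤ (n:ℝ)^(m:ℝ) := by
        rw [← Real.rpow_natCast (n:ℝ) s]
        exact Real.rpow_le_rpow_of_exponent_le hn1R (by exact_mod_cast hsm)
      have hc0 := hcT0 0
      calc (n:ℝ)^s * (B * (cT 0 * ((n:ℝ)^(-τ) * h₀^(-τ))))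
          = (B * cT 0 * h₀^(-τ) * (n:ℝ)^(-τ)) * (n:ℝ)^s := by ring
        _ ≤ (B * cT 0 * h₀^(-τ) * (n:ℝ)^(-τ)) * (n:ℝ)^(m:ℝ) := by
            apply mul_le_mul_of_nonneg_left hns (by positivity)
        _ = B * cT 0 * h₀^(-τ) * ((n:ℝ)^(m:ℝ) * (n:ℝ)^(-τ)) := by ring
        _ = B * cT 0 * h₀^(-τ) * (n:ℝ)^((m:ℝ)-τ) := by
            rw [← Real.rpow_add hn0, ← sub_eq_add_neg]
    calc (n:ℝ)^s * |∑ k ∈ Λ, rr k * Ψ (u - k)|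
        ≤ (n:ℝ)^s * ((ε'/(n:ℝ)^m) * Dm + B * (cT 0 * ((n:ℝ)*h₀)^(-τ))) := by
          apply mul_le_mul_of_nonneg_left (habsle.trans hcomb) (by positivity)
      _ = (n:ℝ)^s * ((ε'/(n:ℝ)^m) * Dm) + (n:ℝ)^s * (B * (cT 0 * ((n:ℝ)*h₀)^(-τ))) := by ring
      _ ≤ ε' * Dm + B * cT 0 * h₀^(-τ) * (n:ℝ)^((m:ℝ)-τ) := add_le_add hfinal1 hfinal2
  -- power comparisons
  have hpowm : (n:ℝ)^((m:ℝ)-τ) = (n:ℝ)^m * (n:ℝ)^(-τ) := by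
    rw [sub_eq_add_neg, ← Real.rpow_natCast (n:ℝ) m, ← Real.rpow_add hn0]
  -- assemble
  rw [Real.dist_eq, hDeriv, hdecomp]
  have hA1 : |∑ j ∈ Finset.range (m+1), (g j x / (j.factorial:ℝ)) * ((n:ℝ)^s/(n:ℝ)^j) * T j
      - ∑ j ∈ Finset.range (m+1), (g j x / (j.factorial:ℝ)) * ((n:ℝ)^s/(n:ℝ)^j) * SA.momVal A s j|
      ≤ M * CT * δ^(-τ) * (n:ℝ)^((m:ℝ)-τ) := by
    rw [← Finset.sum_sub_distrib]
    have hterm : ∀ j ∈ Finset.range (m+1),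
        |(g j x / (j.factorial:ℝ)) * ((n:ℝ)^s/(n:ℝ)^j) * T j
          - (g j x / (j.factorial:ℝ)) * ((n:ℝ)^s/(n:ℝ)^j) * SA.momVal A s j|
        ≤ M * (n:ℝ)^m * (cT j * ((n:ℝ)*δ)^(-τ)) := by
      intro j hj
      have hjm : j ≤ m := by
        have := Finset.mem_range.1 hj; omega
      have hcj : |(g j x / (j.factorial:ℝ)) * ((n:ℝ)^s/(n:ℝ)^j)| ≤ M * (n:ℝ)^m := by
        rw [abs_mul, abs_div]
        have hfact : (1:ℝ) ≤ |(j.factorial:ℝ)| := by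
          rw [abs_of_pos (by positivity)]
          exact_mod_cast Nat.one_le_iff_ne_zero.2 (Nat.factorial_ne_zero j)
        have hg : |g j x| ≤ M := hMg j hjm x hxS
        have hq : |(n:ℝ)^s/(n:ℝ)^j| ≤ (n:ℝ)^m := by
          rw [abs_div, abs_of_pos (by positivity), abs_of_pos (by positivity)]
          calc (n:ℝ)^s/(n:ℝ)^j ≤ (n:ℝ)^s := by
                apply div_le_self (by positivity)
                calc (1:ℝ) = 1^j := (one_pow j).symm
                  _ ≤ (n:ℝ)^j := pow_le_pow_left₀ zero_le_one hn1R j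
            _ ≤ (n:ℝ)^m := pow_le_pow_right₀ hn1R hsm
        have hgf : |g j x|/|(j.factorial:ℝ)| ≤ M :=
          le_trans (div_le_self (abs_nonneg _) hfact) hg
        exact mul_le_mul hgf hq (abs_nonneg _) (by linarith)
      rw [← mul_sub]
      rw [abs_mul]
      apply mul_le_mul hcj (hE1 j hj) (abs_nonneg _) (by positivity)
    calc |∑ j ∈ Finset.range (m+1), ((g j x / (j.factorial:ℝ)) * ((n:ℝ)^s/(n:ℝ)^j) * T j
          - (g j x / (j.factorial:ℝ)) * ((n:ℝ)^s/(n:ℝ)^j) * SA.momVal A s j)|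
        ≤ ∑ j ∈ Finset.range (m+1), |(g j x / (j.factorial:ℝ)) * ((n:ℝ)^s/(n:ℝ)^j) * T j
          - (g j x / (j.factorial:ℝ)) * ((n:ℝ)^s/(n:ℝ)^j) * SA.momVal A s j| :=
          Finset.abs_sum_le_sum_abs _ _
      _ ≤ ∑ j ∈ Finset.range (m+1), M * (n:ℝ)^m * (cT j * ((n:ℝ)*δ)^(-τ)) :=
          Finset.sum_le_sum hterm
      _ = M * (n:ℝ)^m * ((n:ℝ)*δ)^(-τ) * CT := by
          rw [hCTdef, Finset.mul_sum]
          apply Finset.sum_congr rfl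
          intro j _; ring
      _ = M * CT * δ^(-τ) * (n:ℝ)^((m:ℝ)-τ) := by
          rw [Real.mul_rpow hn0.le hδ.le, hpowm]
          ring
  -- final calc
  have hRabs : |(n:ℝ)^s * ∑ k ∈ Λ, rr k * Ψ (u - k)|
      = (n:ℝ)^s * |∑ k ∈ Λ, rr k * Ψ (u - k)| := by
    rw [abs_mul, abs_of_pos (by positivity)]
  have hε'Dm : ε' * Dm ≤ ε/4 := by
    rw [hε'def, div_mul_eq_mul_div, div_le_div_iff₀ (by positivity) (by norm_num)]
    nlinarith
  set P1 : ℝ := ∑ j ∈ Finset.range (m+1), (g j x / (j.factorial:ℝ)) * ((n:ℝ)^s/(n:ℝ)^j) * T j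
    with hP1def
  set Mid : ℝ := ∑ j ∈ Finset.range (m+1),
      (g j x / (j.factorial:ℝ)) * ((n:ℝ)^s/(n:ℝ)^j) * SA.momVal A s j with hMiddef
  set RR : ℝ := (n:ℝ)^s * ∑ k ∈ Λ, rr k * Ψ (u - k) with hRRdef
  have e0 : iteratedDerivWithin s f S x = g s x := rfl
  have htri : |g s x - (P1 + RR)| ≤ |Mid - g s x| + |P1 - Mid| + |RR| := by
    have : g s x - (P1 + RR) = -(Mid - g s x) + -(P1 - Mid) + -RR := by ring
    rw [this]
    calc |(-(Mid - g s x)) + -(P1 - Mid) + -RR|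
        ≤ |(-(Mid - g s x)) + -(P1 - Mid)| + |(-RR)| := abs_add_le _ _
      _ ≤ |(-(Mid - g s x))| + |(-(P1 - Mid))| + |(-RR)| := by
          have := abs_add_le (-(Mid - g s x)) (-(P1 - Mid))
          linarith
      _ = |Mid - g s x| + |P1 - Mid| + |RR| := by rw [abs_neg, abs_neg, abs_neg]
  rw [e0]
  have hfinal : |g s x - (P1 + RR)| < ε := by
    have hb1 : |Mid - g s x| ≤ CC2 / n := hMid
    have hb2 : |P1 - Mid| ≤ M * CT * δ^(-τ) * (n:ℝ)^((m:ℝ)-τ) := hA1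
    have hb3 : |RR| ≤ ε' * Dm + B * cT 0 * h₀^(-τ) * (n:ℝ)^((m:ℝ)-τ) := by
      rw [hRRdef, hRabs]
      exact hRem
    have hCC1eq : M * CT * δ^(-τ) * (n:ℝ)^((m:ℝ)-τ) + B * cT 0 * h₀^(-τ) * (n:ℝ)^((m:ℝ)-τ)
        = CC1 * (n:ℝ)^((m:ℝ)-τ) := by rw [hCC1def]; ring
    have : |g s x - (P1 + RR)| ≤ CC2/n + CC1 * (n:ℝ)^((m:ℝ)-τ) + ε' * Dm := by
      have := htri
      linarith [hCC1eq]
    calc |g s x - (P1 + RR)| ≤ CC2/n + CC1 * (n:ℝ)^((m:ℝ)-τ) + ε' * Dm := this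
      _ < ε/4 + ε/4 + ε/4 := by
          have := hn1; have := hn2
          linarith
      _ < ε := by linarith
  exact hfinal
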